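/- arXiv:1611.03841 — 14 statements merged into one kernel-verified Lean document; each statement's English description precedes it below -/
import Mathlib

section
/- The foresighted utility defined by the coupled integral equations U(a,θ) = ρ ∫₀^∞ ( ∫₀^t e^{-ρτ} u(a) dτ + e^{-ρt} U_I ) θβa e^{-θβa t} dt and U_I = ∫₀^∞ ( ∫₀^t e^{-ρτ}(-q) dτ + ρ^{-1} e^{-ρt} U(a,θ) ) δ e^{-δt} dt has the unique closed-form solution U(a,θ) = ((ρ+δ)u(a) - βθa q)/(ρ+δ+βθa), for ρ, δ, β, q > 0, θ ∈ (0,1], a > 0. -/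
open MeasureTheory Real Set

lemma expInt {b : ℝ} (hb : 0 < b) : ∫ x in Set.Ioi (0:ℝ), Real.exp (-(b*x)) = b⁻¹ := by
  have h := MeasureTheory.integral_comp_mul_left_Ioi (fun x => Real.exp (-x)) 0 hb
  simp only [mul_zero, integral_exp_neg_Ioi, neg_zero, Real.exp_zero, smul_eq_mul, mul_one] at h
  simpa using h

lemma innerInt {ρ : ℝ} (hρ : 0 < ρ) {t : ℝ} (ht : 0 < t) :
    ∫ s in Set.Ioc (0:ℝ) t, Real.exp (-ρ * s) = (1 - Real.exp (-ρ * t)) / ρ := by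
  rw [← intervalIntegral.integral_of_le ht.le]
  have h := intervalIntegral.integral_comp_mul_left (fun x => Real.exp x) (c := -ρ) (a := (0:ℝ)) (b := t) (neg_ne_zero.mpr hρ.ne')
  simp only [mul_zero, smul_eq_mul, integral_exp, Real.exp_zero] at h
  rw [h]
  field_simp [hρ.ne']
  ring

lemma keyInt (ρ k c X : ℝ) (hρ : 0 < ρ) (hk : 0 < k) :
    ∫ t in Set.Ioi (0:ℝ),
      ((∫ s in Set.Ioc (0:ℝ) t, Real.exp (-ρ * s) * c) + Real.exp (-ρ * t) * X)
        * (k * Real.exp (-k * t)) = (c + X * k) / (ρ + k) := by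
  have hcong : ∀ t ∈ Set.Ioi (0:ℝ),
      ((∫ s in Set.Ioc (0:ℝ) t, Real.exp (-ρ * s) * c) + Real.exp (-ρ * t) * X)
        * (k * Real.exp (-k * t))
      = (c*k/ρ) * Real.exp (-(k*t)) + (X*k - c*k/ρ) * Real.exp (-((ρ+k)*t)) := by
    intro t ht
    rw [MeasureTheory.integral_mul_const, innerInt hρ ht]
    have he : Real.exp (-((ρ+k)*t)) = Real.exp (-ρ*t) * Real.exp (-(k*t)) := by
      rw [← Real.exp_add]; ring_nf
    have he2 : Real.exp (-k*t) = Real.exp (-(k*t)) := by ring_nf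
    rw [he, he2]
    field_simp
    ring
  rw [MeasureTheory.setIntegral_congr_fun measurableSet_Ioi hcong]
  have i1 : MeasureTheory.IntegrableOn (fun t => (c*k/ρ) * Real.exp (-(k*t))) (Set.Ioi (0:ℝ)) := by
    apply MeasureTheory.Integrable.const_mul
    exact (by simpa [neg_mul] using exp_neg_integrableOn_Ioi 0 hk : MeasureTheory.IntegrableOn (fun x : ℝ => Real.exp (-(k * x))) (Set.Ioi (0:ℝ)))
  have i2 : MeasureTheory.IntegrableOn (fun t => (X*k - c*k/ρ) * Real.exp (-((ρ+k)*t))) (Set.Ioi (0:ℝ)) := by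
    apply MeasureTheory.Integrable.const_mul
    have h2 := exp_neg_integrableOn_Ioi 0 (by positivity : (0:ℝ) < ρ + k)
    have heq : (fun x : ℝ => Real.exp (-((ρ+k)*x))) = fun x => Real.exp (-(ρ+k)*x) := by
      funext x; ring_nf
    rw [heq]; exact h2
  rw [MeasureTheory.integral_add i1 i2, MeasureTheory.integral_const_mul, MeasureTheory.integral_const_mul,
    expInt hk, expInt (by positivity : (0:ℝ) < ρ + k)]
  field_simp
  ring

/-- the coupled integral equations for the foresighted utility have the
unique closed-form solution `U = ((ρ+δ)u(a) - βθa q)/(ρ+δ+βθa)`. -/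
theorem foresighted_utility_closed_form
    (ρ δ β q θ a : ℝ) (u : ℝ → ℝ)
    (hρ : 0 < ρ) (hδ : 0 < δ) (hβ : 0 < β) (hq : 0 < q)
    (hθ : θ ∈ Set.Ioc (0:ℝ) 1) (ha : 0 < a)
    (U UI : ℝ)
    (hU : U = ρ * ∫ t in Set.Ioi (0:ℝ),
      ((∫ s in Set.Ioc (0:ℝ) t, Real.exp (-ρ * s) * u a) + Real.exp (-ρ * t) * UI)
        * (θ * β * a * Real.exp (-(θ * β * a) * t)))
    (hUI : UI = ∫ t in Set.Ioi (0:ℝ),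
      ((∫ s in Set.Ioc (0:ℝ) t, Real.exp (-ρ * s) * (-q)) + ρ⁻¹ * Real.exp (-ρ * t) * U)
        * (δ * Real.exp (-δ * t))) :
    U = ((ρ + δ) * u a - β * θ * a * q) / (ρ + δ + β * θ * a) := by
  have hθ0 : 0 < θ := hθ.1
  have hm : 0 < θ * β * a := by positivity
  rw [keyInt ρ (θ*β*a) (u a) UI hρ hm] at hU
  simp_rw [show ∀ t : ℝ, ρ⁻¹ * Real.exp (-ρ * t) * U = Real.exp (-ρ * t) * (ρ⁻¹ * U) from
    fun t => by ring] at hUI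
  rw [keyInt ρ δ (-q) (ρ⁻¹ * U) hρ hδ] at hUI
  have h1 : ρ + θ * β * a ≠ 0 := by positivity
  have h2 : ρ + δ ≠ 0 := by positivity
  have h3 : ρ + δ + β * θ * a ≠ 0 := by positivity
  field_simp at hU hUI ⊢
  nlinarith [hU, hUI, sq_nonneg ρ]
end

section
/- Let u(a) = v(r₀ a) - c a with v twice differentiable, v' > 0, v'' < 0, v(0) = 0, v(r₀M) > cM, and v'(r₀M) < c/r₀ < v'(0). Define U(a) = ((ρ+δ)u(a) - βθa q)/(ρ+δ+βθa) on [0,M]. If θ ≥ (r₀v'(0) - c)(ρ+δ)/(qβ), then a = 0 maximizes U on [0,M]. -/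
/-- if the system compromise state exceeds the threshold
`(r₀v'(0) - c)(ρ+δ)/(qβ)`, then `a = 0` maximizes the foresighted utility on `[0,M]`. -/
theorem zero_participation_optimal
    (r₀ c q ρ δ β M θ : ℝ) (v v' v'' : ℝ → ℝ)
    (hr₀ : 0 < r₀) (hc : 0 < c) (hq : 0 < q) (hρ : 0 < ρ) (hδ : 0 < δ) (hβ : 0 < β)
    (hM : 0 < M) (hθ : θ ∈ Set.Icc (0:ℝ) 1)
    (hder1 : ∀ x, 0 ≤ x → HasDerivAt v (v' x) x)
    (hder2 : ∀ x, 0 ≤ x → HasDerivAt v' (v'' x) x)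
    (hv'pos : ∀ x, 0 ≤ x → 0 < v' x)
    (hv''neg : ∀ x, 0 ≤ x → v'' x < 0)
    (hv0 : v 0 = 0)
    (hvM : v (r₀ * M) > c * M)
    (hfoc1 : v' (r₀ * M) < c / r₀) (hfoc2 : c / r₀ < v' 0)
    (u U : ℝ → ℝ)
    (hu : ∀ a, u a = v (r₀ * a) - c * a)
    (hUdef : ∀ a, U a = ((ρ + δ) * u a - β * θ * a * q) / (ρ + δ + β * θ * a))
    (hθbig : θ ≥ (r₀ * v' 0 - c) * (ρ + δ) / (q * β)) :
    ∀ a ∈ Set.Icc (0:ℝ) M, U a ≤ U 0 := by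
  intro a ha
  obtain ⟨ha0, haM⟩ := ha
  have hθ0 : 0 ≤ θ := hθ.1
  have hU0 : U 0 = 0 := by
    simp [hUdef, hu, hv0]
  rw [hU0]
  rcases eq_or_lt_of_le ha0 with h | hapos
  · rw [← h, hU0]
  -- key: θ * (q*β) ≥ (r₀ v'0 - c)(ρ+δ)
  have hkey : (r₀ * v' 0 - c) * (ρ + δ) ≤ θ * (q * β) :=
    (div_le_iff₀ (mul_pos hq hβ)).mp hθbig
  -- MVT for v on [0, r₀ a]
  have hx : (0:ℝ) < r₀ * a := mul_pos hr₀ hapos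
  have hcv : ContinuousOn v (Set.Icc 0 (r₀ * a)) :=
    fun x hx => (hder1 x hx.1).continuousAt.continuousWithinAt
  obtain ⟨ξ, hξ, hξeq⟩ := exists_hasDerivAt_eq_slope v v' hx hcv
    (fun x hx => hder1 x hx.1.le)
  -- MVT for v' on [0, ξ]
  have hcv' : ContinuousOn v' (Set.Icc 0 ξ) :=
    fun x hx => (hder2 x hx.1).continuousAt.continuousWithinAt
  obtain ⟨η, hη, hηeq⟩ := exists_hasDerivAt_eq_slope v' v'' hξ.1 hcv'
    (fun x hx => hder2 x hx.1.le)
  have hη0 : v'' η < 0 := hv''neg η hη.1.le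
  have hv'le : v' ξ < v' 0 := by
    rw [hηeq, sub_zero] at hη0
    have := mul_neg_of_neg_of_pos hη0 hξ.1
    rw [div_mul_cancel₀ _ (ne_of_gt hξ.1)] at this
    linarith
  have hvub : v (r₀ * a) ≤ v' 0 * (r₀ * a) := by
    have : v (r₀ * a) = v' ξ * (r₀ * a) := by
      rw [hξeq]; field_simp [hv0]; simp only [hv0, sub_zero]; ring
    rw [this]
    exact mul_le_mul_of_nonneg_right hv'le.le hx.le
  -- denominator positive
  have hD : 0 < ρ + δ + β * θ * a := by positivity
  rw [hUdef]
  apply div_nonpos_of_nonpos_of_nonneg _ hD.le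
  rw [hu]
  nlinarith [mul_le_mul_of_nonneg_right hkey ha0, hvub]
end

section
/- Under the same assumptions on v, if 0 < θ < (r₀v'(0) - c)(ρ+δ)/(qβ), then the equation u'(a)(ρ+δ+βθa) - u(a)βθ - βθq = 0 has a unique solution a*(θ) in (0,M), and a*(θ) is the unique maximizer of U(a,θ) = ((ρ+δ)u(a) - βθa q)/(ρ+δ+βθa) on [0,M]. -/
/-- when `0 < θ < (r₀v'(0)-c)(ρ+δ)/(qβ)`, the first-order condition has a
unique solution in `(0,M)`, which is the unique maximizer of the foresighted utility on `[0,M]`. -/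
theorem positive_participation_optimal
    (r₀ c q ρ δ β M θ : ℝ) (v v' v'' : ℝ → ℝ)
    (hr₀ : 0 < r₀) (hc : 0 < c) (hq : 0 < q) (hρ : 0 < ρ) (hδ : 0 < δ) (hβ : 0 < β)
    (hM : 0 < M)
    (hder1 : ∀ x, 0 ≤ x → HasDerivAt v (v' x) x)
    (hder2 : ∀ x, 0 ≤ x → HasDerivAt v' (v'' x) x)
    (hv'pos : ∀ x, 0 ≤ x → 0 < v' x)
    (hv''neg : ∀ x, 0 ≤ x → v'' x < 0)
    (hv0 : v 0 = 0)
    (hvM : v (r₀ * M) > c * M)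
    (hfoc1 : v' (r₀ * M) < c / r₀) (hfoc2 : c / r₀ < v' 0)
    (u U : ℝ → ℝ)
    (hu : ∀ a, u a = v (r₀ * a) - c * a)
    (hUdef : ∀ a, U a = ((ρ + δ) * u a - β * θ * a * q) / (ρ + δ + β * θ * a))
    (hθpos : 0 < θ) (hθsmall : θ < (r₀ * v' 0 - c) * (ρ + δ) / (q * β)) :
    ∃ a, a ∈ Set.Ioo (0:ℝ) M ∧
      (r₀ * v' (r₀ * a) - c) * (ρ + δ + β * θ * a) - u a * (β * θ) - β * θ * q = 0 ∧
      (∀ b ∈ Set.Ioo (0:ℝ) M,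
        (r₀ * v' (r₀ * b) - c) * (ρ + δ + β * θ * b) - u b * (β * θ) - β * θ * q = 0 → b = a) ∧
      (∀ b ∈ Set.Icc (0:ℝ) M, b ≠ a → U b < U a) := by
  have huf : u = fun a => v (r₀ * a) - c * a := funext hu
  have hUf : U = fun a => ((ρ + δ) * u a - β * θ * a * q) / (ρ + δ + β * θ * a) := funext hUdef
  have hru : ∀ x : ℝ, 0 ≤ x → (0:ℝ) ≤ r₀ * x := fun x hx => mul_nonneg hr₀.le hx
  have hk : 0 < β * θ := mul_pos hβ hθpos
  have hDpos : ∀ x : ℝ, 0 ≤ x → 0 < ρ + δ + β * θ * x := by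
    intro x hx
    nlinarith [mul_nonneg hk.le hx]
  -- derivative of u
  have hdu : ∀ x : ℝ, 0 ≤ x → HasDerivAt u (r₀ * v' (r₀ * x) - c) x := by
    intro x hx
    rw [huf]
    have h1 : HasDerivAt (fun a : ℝ => v (r₀ * a)) (v' (r₀ * x) * (r₀ * 1)) x :=
      (hder1 (r₀ * x) (hru x hx)).comp x ((hasDerivAt_id x).const_mul r₀)
    have h2 : HasDerivAt (fun a : ℝ => c * a) (c * 1) x := (hasDerivAt_id x).const_mul c
    have h3 := h1.sub h2
    refine h3.congr_deriv ?_
    ring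
  -- derivative of the marginal utility
  have hdu' : ∀ x : ℝ, 0 ≤ x →
      HasDerivAt (fun a : ℝ => r₀ * v' (r₀ * a) - c) (r₀ * (v'' (r₀ * x) * (r₀ * 1))) x := by
    intro x hx
    have h1 : HasDerivAt (fun a : ℝ => v' (r₀ * a)) (v'' (r₀ * x) * (r₀ * 1)) x :=
      (hder2 (r₀ * x) (hru x hx)).comp x ((hasDerivAt_id x).const_mul r₀)
    exact (h1.const_mul r₀).sub_const c
  set F : ℝ → ℝ := fun a =>
    (r₀ * v' (r₀ * a) - c) * (ρ + δ + β * θ * a) - u a * (β * θ) - β * θ * q with hFdef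
  have hDD : ∀ x : ℝ, HasDerivAt (fun a : ℝ => ρ + δ + β * θ * a) (β * θ) x := by
    intro x
    have := ((hasDerivAt_id x).const_mul (β * θ)).const_add (ρ + δ)
    simpa using this
  have hdF : ∀ x : ℝ, 0 ≤ x →
      HasDerivAt F (r₀ * (v'' (r₀ * x) * (r₀ * 1)) * (ρ + δ + β * θ * x)) x := by
    intro x hx
    have h1 := (hdu' x hx).mul (hDD x)
    have h2 := (hdu x hx).mul_const (β * θ)
    have h3 := (h1.sub h2).sub_const (β * θ * q)
    rw [hFdef]
    refine h3.congr_deriv ?_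
    ring
  have hFcont : ContinuousOn F (Set.Icc 0 M) :=
    fun x hx => ((hdF x hx.1).continuousAt).continuousWithinAt
  have hFanti : StrictAntiOn F (Set.Icc 0 M) := by
    apply strictAntiOn_of_deriv_neg (convex_Icc 0 M) hFcont
    intro x hx
    rw [interior_Icc] at hx
    rw [(hdF x hx.1.le).deriv]
    have h1 := hv''neg (r₀ * x) (hru x hx.1.le)
    have h2 := hDpos x hx.1.le
    nlinarith [mul_neg_of_neg_of_pos (mul_neg_of_pos_of_neg (mul_pos hr₀ hr₀) h1) h2]
  have hu0 : u 0 = 0 := by rw [hu]; simp [hv0]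
  have hF0 : 0 < F 0 := by
    have h := hθsmall
    rw [lt_div_iff₀ (by positivity : (0:ℝ) < q * β)] at h
    have : F 0 = (r₀ * v' 0 - c) * (ρ + δ) - β * θ * q := by
      rw [hFdef]; simp [hu0]
    rw [this]
    nlinarith
  have hFM : F M < 0 := by
    have h1 : r₀ * v' (r₀ * M) < c := by
      rw [lt_div_iff₀ hr₀] at hfoc1
      linarith
    have h2 : 0 < u M := by rw [hu]; linarith
    have h3 := hDpos M hM.le
    have : F M = (r₀ * v' (r₀ * M) - c) * (ρ + δ + β * θ * M) - u M * (β * θ) - β * θ * q := by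
      rw [hFdef]
    rw [this]
    nlinarith [mul_pos h3 (by linarith : (0:ℝ) < c - r₀ * v' (r₀ * M)), mul_pos hk h2,
      mul_pos hk hq]
  obtain ⟨a, haIoo, hFa⟩ := intermediate_value_Ioo' hM.le hFcont ⟨hFM, hF0⟩
  have haIcc : a ∈ Set.Icc (0:ℝ) M := ⟨haIoo.1.le, haIoo.2.le⟩
  -- derivative of U
  have hdU : ∀ x : ℝ, 0 ≤ x →
      HasDerivAt U ((ρ + δ) * F x / (ρ + δ + β * θ * x) ^ 2) x := by
    intro x hx
    have hN : HasDerivAt (fun a : ℝ => (ρ + δ) * u a - β * θ * a * q)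
        ((ρ + δ) * (r₀ * v' (r₀ * x) - c) - β * θ * q) x := by
      have h1 := (hdu x hx).const_mul (ρ + δ)
      have h2 : HasDerivAt (fun a : ℝ => β * θ * a * q) (β * θ * q) x := by
        have := ((hasDerivAt_id x).const_mul (β * θ)).mul_const q
        simpa using this
      exact h1.sub h2
    have hne : (ρ + δ + β * θ * x) ≠ 0 := ne_of_gt (hDpos x hx)
    have h := hN.div (hDD x) hne
    rw [hUf]
    refine h.congr_deriv ?_
    rw [hFdef]
    field_simp
    ring
  have hUcont : ContinuousOn U (Set.Icc 0 M) :=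
    fun x hx => ((hdU x hx.1).continuousAt).continuousWithinAt
  have hmono : StrictMonoOn U (Set.Icc 0 a) := by
    apply strictMonoOn_of_deriv_pos (convex_Icc 0 a)
      (hUcont.mono (Set.Icc_subset_Icc le_rfl haIoo.2.le))
    intro x hx
    rw [interior_Icc] at hx
    rw [(hdU x hx.1.le).deriv]
    have hFx : 0 < F x := by
      have := hFanti ⟨hx.1.le, hx.2.le.trans haIoo.2.le⟩ haIcc hx.2
      rwa [hFa] at this
    exact div_pos (mul_pos (by linarith) hFx) (pow_pos (hDpos x hx.1.le) 2)
  have hanti : StrictAntiOn U (Set.Icc a M) := by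
    apply strictAntiOn_of_deriv_neg (convex_Icc a M)
      (hUcont.mono (Set.Icc_subset_Icc haIoo.1.le le_rfl))
    intro x hx
    rw [interior_Icc] at hx
    have hx0 : (0:ℝ) ≤ x := haIoo.1.le.trans hx.1.le
    rw [(hdU x hx0).deriv]
    have hFx : F x < 0 := by
      have := hFanti haIcc ⟨hx0, hx.2.le⟩ hx.1
      rwa [hFa] at this
    exact div_neg_of_neg_of_pos (mul_neg_of_pos_of_neg (by linarith) hFx)
      (pow_pos (hDpos x hx0) 2)
  refine ⟨a, haIoo, ?_, ?_, ?_⟩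
  · have := hFa; rw [hFdef] at this; exact this
  · intro b hb hFb
    have hFb' : F b = 0 := by rw [hFdef]; exact hFb
    exact hFanti.injOn ⟨hb.1.le, hb.2.le⟩ haIcc (by rw [hFb', hFa])
  · intro b hb hne
    rcases lt_or_gt_of_ne hne with h | h
    · exact hmono ⟨hb.1, h.le⟩ ⟨haIoo.1.le, le_rfl⟩ h
    · exact hanti ⟨le_rfl, haIoo.2.le⟩ ⟨h.le, hb.2⟩ h
end

section
/- Under the same assumptions, the optimal participation level a*(θ), defined for θ ∈ (0, (r₀v'(0)-c)(ρ+δ)/(qβ)) as the unique solution in (0,M) of u'(a)(ρ+δ+βθa) - u(a)βθ - βθq = 0, is strictly decreasing in θ. -/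
/-- the optimal participation level `a*(θ)` (the unique solution in `(0,M)` of the
first-order condition) is strictly decreasing in `θ`. -/
theorem optimal_participation_strictAnti_in_theta
    (r₀ c q ρ δ β M : ℝ) (v v' v'' : ℝ → ℝ)
    (hr₀ : 0 < r₀) (hc : 0 < c) (hq : 0 < q) (hρ : 0 < ρ) (hδ : 0 < δ) (hβ : 0 < β)
    (hM : 0 < M)
    (hder1 : ∀ x, 0 ≤ x → HasDerivAt v (v' x) x)
    (hder2 : ∀ x, 0 ≤ x → HasDerivAt v' (v'' x) x)
    (hv'pos : ∀ x, 0 ≤ x → 0 < v' x)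
    (hv''neg : ∀ x, 0 ≤ x → v'' x < 0)
    (hv0 : v 0 = 0)
    (hvM : v (r₀ * M) > c * M)
    (hfoc1 : v' (r₀ * M) < c / r₀) (hfoc2 : c / r₀ < v' 0)
    (u : ℝ → ℝ) (hu : ∀ a, u a = v (r₀ * a) - c * a)
    (θ₁ θ₂ a₁ a₂ : ℝ)
    (hθ₁ : 0 < θ₁) (hθ₁₂ : θ₁ < θ₂) (hθ₂ : θ₂ < (r₀ * v' 0 - c) * (ρ + δ) / (q * β))
    (ha₁ : a₁ ∈ Set.Ioo (0:ℝ) M) (ha₂ : a₂ ∈ Set.Ioo (0:ℝ) M)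
    (hfoc₁ : (r₀ * v' (r₀ * a₁) - c) * (ρ + δ + β * θ₁ * a₁) - u a₁ * (β * θ₁) - β * θ₁ * q = 0)
    (hfoc₂ : (r₀ * v' (r₀ * a₂) - c) * (ρ + δ + β * θ₂ * a₂) - u a₂ * (β * θ₂) - β * θ₂ * q = 0) :
    a₂ < a₁ := by
  obtain ⟨ha₁0, ha₁M⟩ := ha₁
  obtain ⟨ha₂0, ha₂M⟩ := ha₂
  set U : ℝ → ℝ := fun a => r₀ * v' (r₀ * a) - c with hUdef
  have hlin : ∀ a : ℝ, HasDerivAt (fun x : ℝ => r₀ * x) r₀ a := by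
    intro a; simpa using (hasDerivAt_id a).const_mul r₀
  have hUd : ∀ a, 0 ≤ a → HasDerivAt U (r₀ * (v'' (r₀ * a) * r₀)) a := by
    intro a ha
    exact (((hder2 (r₀ * a) (mul_nonneg hr₀.le ha)).comp a (hlin a)).const_mul r₀).sub_const c
  have hud : ∀ a, 0 ≤ a → HasDerivAt u (U a) a := by
    intro a ha
    have hufun : u = fun x => v (r₀ * x) - c * x := funext hu
    have h1 : HasDerivAt (fun x => v (r₀ * x) - c * x) (v' (r₀ * a) * r₀ - c) a := by
      have h2 := ((hder1 (r₀ * a) (mul_nonneg hr₀.le ha)).comp a (hlin a))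
      have h3 : HasDerivAt (fun x : ℝ => c * x) c a := by
        simpa using (hasDerivAt_id a).const_mul c
      exact h2.sub h3
    rw [hufun]
    convert h1 using 1
    simp [hUdef]; ring
  -- U is antitone on [0, M]
  have hUanti : AntitoneOn U (Set.Icc 0 M) := by
    apply antitoneOn_of_deriv_nonpos (convex_Icc 0 M)
    · exact fun x hx => (hUd x hx.1).continuousAt.continuousWithinAt
    · intro x hx
      rw [interior_Icc] at hx
      exact (hUd x hx.1.le).differentiableAt.differentiableWithinAt
    · intro x hx
      rw [interior_Icc] at hx
      rw [(hUd x hx.1.le).deriv]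
      have := hv''neg (r₀ * x) (mul_nonneg hr₀.le hx.1.le)
      nlinarith [mul_pos hr₀ hr₀]
  -- concavity inequality
  have hconc : ∀ x y, 0 ≤ x → x ≤ y → y ≤ M → U y * (y - x) ≤ u y - u x := by
    intro x y hx hxy hyM
    rcases eq_or_lt_of_le hxy with rfl | hlt
    · simp
    · have hg : MonotoneOn (fun t => u t - U y * t) (Set.Icc x y) := by
        have hdd : ∀ t, x ≤ t → HasDerivAt (fun t => u t - U y * t) (U t - U y) t := by
          intro t ht
          have h3 : HasDerivAt (fun t : ℝ => U y * t) (U y) t := by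
            simpa using (hasDerivAt_id t).const_mul (U y)
          exact (hud t (hx.trans ht)).sub h3
        apply monotoneOn_of_deriv_nonneg (convex_Icc x y)
        · exact fun t ht => (hdd t ht.1).continuousAt.continuousWithinAt
        · intro t ht
          rw [interior_Icc] at ht
          exact (hdd t ht.1.le).differentiableAt.differentiableWithinAt
        · intro t ht
          rw [interior_Icc] at ht
          rw [(hdd t ht.1.le).deriv]
          have := hUanti (Set.mem_Icc.2 ⟨hx.trans ht.1.le, ht.2.le.trans hyM⟩)
            (Set.mem_Icc.2 ⟨hx.trans hxy, hyM⟩) ht.2.le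
          linarith
      have := hg (Set.mem_Icc.2 ⟨le_refl x, hxy⟩) (Set.mem_Icc.2 ⟨hxy, le_refl y⟩) hxy
      simp only at this
      nlinarith
  by_contra hcon
  push_neg at hcon  -- a₁ ≤ a₂
  have hu0 : u 0 = 0 := by rw [hu 0]; simp [hv0]
  have hA : U a₂ * a₂ ≤ u a₂ := by
    have := hconc 0 a₂ le_rfl ha₂0.le ha₂M.le
    simpa [hu0] using this
  have hB : U a₂ * (a₂ - a₁) ≤ u a₂ - u a₁ := hconc a₁ a₂ ha₁0.le hcon ha₂M.le
  have hAnti : U a₂ ≤ U a₁ :=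
    hUanti (Set.mem_Icc.2 ⟨ha₁0.le, ha₁M.le⟩) (Set.mem_Icc.2 ⟨ha₂0.le, ha₂M.le⟩) hcon
  have hE₁ : U a₁ * (ρ + δ) = β * θ₁ * (u a₁ + q - U a₁ * a₁) := by
    simp only [hUdef]; linear_combination hfoc₁
  have hE₂ : U a₂ * (ρ + δ) = β * θ₂ * (u a₂ + q - U a₂ * a₂) := by
    simp only [hUdef]; linear_combination hfoc₂
  have hD₂pos : 0 < u a₂ + q - U a₂ * a₂ := by linarith
  have hD₁₂ : u a₁ + q - U a₁ * a₁ ≤ u a₂ + q - U a₂ * a₂ := by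
    nlinarith [mul_nonneg ha₁0.le (sub_nonneg.2 hAnti)]
  have step1 : β * θ₂ * (u a₂ + q - U a₂ * a₂) ≤ β * θ₁ * (u a₁ + q - U a₁ * a₁) := by
    rw [← hE₁, ← hE₂]
    exact mul_le_mul_of_nonneg_right hAnti (by linarith)
  have step2 : β * θ₁ * (u a₁ + q - U a₁ * a₁) ≤ β * θ₁ * (u a₂ + q - U a₂ * a₂) :=
    mul_le_mul_of_nonneg_left hD₁₂ (by positivity)
  have step3 : β * θ₁ * (u a₂ + q - U a₂ * a₂) < β * θ₂ * (u a₂ + q - U a₂ * a₂) := by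
    apply mul_lt_mul_of_pos_right _ hD₂pos
    exact mul_lt_mul_of_pos_left hθ₁₂ hβ
  linarith
end

section
/- Under the same assumptions, for fixed θ ∈ (0,1] with θ < (r₀v'(0)-c)(ρ+δ)/(qβ), the optimal participation level a* characterized by (u(a*)+q)/u'(a*) - a* = (ρ+δ)/(βθ) is strictly increasing in ρ and in δ, and strictly decreasing in β. -/
/-- The first-order characterization `(u(a)+q)/u'(a) - a = (ρ+δ)/(βθ)` of the optimal
participation level, with `u(a) = v(r₀a) - ca` and `u'(a) = r₀ v'(r₀ a) - c`. -/
lemma aux_main {r₀ c q M : ℝ} {v v' v'' : ℝ → ℝ}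
    (hr₀ : 0 < r₀) (hq : 0 < q)
    (hder1 : ∀ x, 0 ≤ x → HasDerivAt v (v' x) x)
    (hder2 : ∀ x, 0 ≤ x → HasDerivAt v' (v'' x) x)
    (hv''neg : ∀ x, 0 ≤ x → v'' x < 0)
    (hv0 : v 0 = 0) (hvM : v (r₀ * M) > c * M)
    {k₁ k₂ a₁ a₂ : ℝ} (hk₁ : 0 < k₁) (hk₂ : 0 < k₂) (hk : k₁ < k₂)
    (ha₁ : a₁ ∈ Set.Ioo (0:ℝ) M) (ha₂ : a₂ ∈ Set.Ioo (0:ℝ) M)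
    (h1 : (v (r₀ * a₁) - c * a₁ + q) / (r₀ * v' (r₀ * a₁) - c) - a₁ = k₁)
    (h2 : (v (r₀ * a₂) - c * a₂ + q) / (r₀ * v' (r₀ * a₂) - c) - a₂ = k₂) :
    a₁ < a₂ := by
  set u : ℝ → ℝ := fun a => v (r₀ * a) - c * a + q with hu
  set D : ℝ → ℝ := fun a => r₀ * v' (r₀ * a) - c with hDdef
  -- derivative of u
  have hud : ∀ a : ℝ, 0 ≤ a → HasDerivAt u (D a) a := by
    intro a ha
    have h1 : HasDerivAt (fun x : ℝ => r₀ * x) r₀ a := by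
      simpa using (hasDerivAt_id a).const_mul r₀
    have h2 : HasDerivAt (fun x : ℝ => v (r₀ * x)) (v' (r₀ * a) * r₀) a :=
      (hder1 (r₀ * a) (by positivity)).comp a h1
    have h3 : HasDerivAt (fun x : ℝ => c * x) c a := by
      simpa using (hasDerivAt_id a).const_mul c
    have := (h2.sub h3).add_const q
    simpa [hu, hDdef, mul_comm] using this
  -- derivative of D
  have hDd : ∀ a : ℝ, 0 ≤ a → HasDerivAt D (r₀ ^ 2 * v'' (r₀ * a)) a := by
    intro a ha
    have h1 : HasDerivAt (fun x : ℝ => r₀ * x) r₀ a := by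
      simpa using (hasDerivAt_id a).const_mul r₀
    have h2 : HasDerivAt (fun x : ℝ => v' (r₀ * x)) (v'' (r₀ * a) * r₀) a :=
      (hder2 (r₀ * a) (by positivity)).comp a h1
    have := (h2.const_mul r₀).sub_const c
    have e : r₀ * (v'' (r₀ * a) * r₀) = r₀ ^ 2 * v'' (r₀ * a) := by ring
    simpa [hDdef, e] using this
  -- D is strictly decreasing on nonneg reals
  have hv'anti : StrictAntiOn v' (Set.Ici (0:ℝ)) := by
    apply strictAntiOn_of_deriv_neg (convex_Ici 0)
    · exact fun x hx => (hder2 x hx).continuousAt.continuousWithinAt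
    · intro x hx
      rw [interior_Ici] at hx
      rw [(hder2 x hx.le).deriv]
      exact hv''neg x hx.le
  have hDanti : ∀ x y : ℝ, 0 ≤ x → x < y → D y < D x := by
    intro x y hx hxy
    have : v' (r₀ * y) < v' (r₀ * x) :=
      hv'anti (Set.mem_Ici.mpr (mul_nonneg hr₀.le hx))
        (Set.mem_Ici.mpr (mul_nonneg hr₀.le (hx.trans hxy.le)))
        (by nlinarith)
    simp only [hDdef]
    nlinarith
  -- u is strictly positive (> q) where D > 0
  have hupos : ∀ a : ℝ, 0 < a → 0 < D a → q < u a := by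
    intro a ha hDa
    have hmono : StrictMonoOn u (Set.Icc 0 a) := by
      apply strictMonoOn_of_deriv_pos (convex_Icc 0 a)
      · exact fun x hx => (hud x hx.1).continuousAt.continuousWithinAt
      · intro x hx
        rw [interior_Icc] at hx
        rw [(hud x hx.1.le).deriv]
        exact lt_trans hDa (hDanti x a hx.1.le hx.2)
    have := hmono (Set.left_mem_Icc.mpr ha.le) (Set.right_mem_Icc.mpr ha.le) ha
    have hu0 : u 0 = q := by simp [hu, hv0]
    linarith [this, hu0.symm.le]
  -- at any FOC solution the denominator is positive
  have hDpos : ∀ a k : ℝ, 0 < a → a < M → 0 < k → u a / D a - a = k → 0 < D a := by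
    intro a k ha haM hk heq
    by_contra hcon
    push_neg at hcon
    rcases lt_or_eq_of_le hcon with hlt | heq0
    · -- D a < 0 : then u a < 0, but u decreasing on [a,M] gives u a > u M > q
      have hne : D a ≠ 0 := ne_of_lt hlt
      have hua : u a = (k + a) * D a := by
        field_simp at heq
        linarith
      have huaneg : u a < 0 := by
        have : 0 < k + a := by linarith
        nlinarith
      have hanti : StrictAntiOn u (Set.Icc a M) := by
        apply strictAntiOn_of_deriv_neg (convex_Icc a M)
        · exact fun x hx => (hud x (le_trans ha.le hx.1)).continuousAt.continuousWithinAt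
        · intro x hx
          rw [interior_Icc] at hx
          rw [(hud x (le_trans ha.le hx.1.le)).deriv]
          exact lt_trans (hDanti a x ha.le hx.1) hlt
      have := hanti (Set.left_mem_Icc.mpr haM.le) (Set.right_mem_Icc.mpr haM.le) haM
      have huM : q < u M := by simp only [hu]; linarith
      linarith
    · rw [heq0, div_zero] at heq
      linarith
  have hD1 : 0 < D a₁ := hDpos a₁ k₁ ha₁.1 ha₁.2 hk₁ h1
  have hD2 : 0 < D a₂ := hDpos a₂ k₂ ha₂.1 ha₂.2 hk₂ h2
  -- main comparison
  by_contra hcon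
  push_neg at hcon
  rcases eq_or_lt_of_le hcon with heq | hlt
  · rw [heq] at h2; rw [h1] at h2; linarith
  · -- a₂ < a₁; g strictly increasing on [a₂, a₁] gives contradiction
    set g : ℝ → ℝ := fun a => u a / D a - a with hg
    have hDx : ∀ x : ℝ, x ∈ Set.Icc a₂ a₁ → 0 < D x := by
      intro x hx
      rcases eq_or_lt_of_le hx.2 with h | h
      · rw [h]; exact hD1
      · exact lt_trans hD1 (hDanti x a₁ (le_trans ha₂.1.le hx.1) h)
    have hgd : ∀ x : ℝ, x ∈ Set.Icc a₂ a₁ →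
        HasDerivAt g ((D x * D x - u x * (r₀ ^ 2 * v'' (r₀ * x))) / (D x) ^ 2 - 1) x := by
      intro x hx
      have hx0 : (0:ℝ) ≤ x := le_trans ha₂.1.le hx.1
      exact (((hud x hx0).div (hDd x hx0) (ne_of_gt (hDx x hx)))).sub
        (hasDerivAt_id' x)
    have hmono : StrictMonoOn g (Set.Icc a₂ a₁) := by
      apply strictMonoOn_of_deriv_pos (convex_Icc a₂ a₁)
      · exact fun x hx => (hgd x hx).continuousAt.continuousWithinAt
      · intro x hx
        rw [interior_Icc] at hx
        have hx' : x ∈ Set.Icc a₂ a₁ := ⟨hx.1.le, hx.2.le⟩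
        rw [(hgd x hx').deriv]
        have hx0 : 0 < x := lt_trans ha₂.1 hx.1
        have hux : q < u x := hupos x hx0 (hDx x hx')
        have hw : v'' (r₀ * x) < 0 := hv''neg (r₀ * x) (mul_nonneg hr₀.le hx0.le)
        have hD2pos : (0:ℝ) < (D x) ^ 2 := pow_pos (hDx x hx') 2
        have hneg : u x * (r₀ ^ 2 * v'' (r₀ * x)) < 0 :=
          mul_neg_of_pos_of_neg (lt_trans hq hux)
            (mul_neg_of_pos_of_neg (pow_pos hr₀ 2) hw)
        rw [sub_pos, lt_div_iff₀ hD2pos, pow_two, one_mul]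
        linarith
    have := hmono (Set.left_mem_Icc.mpr hlt.le) (Set.right_mem_Icc.mpr hlt.le) hlt
    simp only [hg] at this
    rw [h1, h2] at this
    linarith

def FOCchar (r₀ c q : ℝ) (v v' : ℝ → ℝ) (ρ δ β θ a : ℝ) : Prop :=
  ((v (r₀ * a) - c * a) + q) / (r₀ * v' (r₀ * a) - c) - a = (ρ + δ) / (β * θ)

/-- the optimal participation level is strictly increasing in `ρ` and `δ` and
strictly decreasing in `β`. -/
theorem optimal_participation_monotone_in_params
    (r₀ c q M θ ρ δ β : ℝ) (v v' v'' : ℝ → ℝ)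
    (hr₀ : 0 < r₀) (hc : 0 < c) (hq : 0 < q) (hM : 0 < M)
    (hρ : 0 < ρ) (hδ : 0 < δ) (hβ : 0 < β)
    (hθ : θ ∈ Set.Ioc (0:ℝ) 1)
    (hder1 : ∀ x, 0 ≤ x → HasDerivAt v (v' x) x)
    (hder2 : ∀ x, 0 ≤ x → HasDerivAt v' (v'' x) x)
    (hv'pos : ∀ x, 0 ≤ x → 0 < v' x)
    (hv''neg : ∀ x, 0 ≤ x → v'' x < 0)
    (hv0 : v 0 = 0)
    (hvM : v (r₀ * M) > c * M)
    (hfoc1 : v' (r₀ * M) < c / r₀) (hfoc2 : c / r₀ < v' 0) :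
    (∀ ρ₁ ρ₂ a₁ a₂ : ℝ, 0 < ρ₁ → ρ₁ < ρ₂ →
      θ < (r₀ * v' 0 - c) * (ρ₁ + δ) / (q * β) →
      a₁ ∈ Set.Ioo (0:ℝ) M → a₂ ∈ Set.Ioo (0:ℝ) M →
      FOCchar r₀ c q v v' ρ₁ δ β θ a₁ → FOCchar r₀ c q v v' ρ₂ δ β θ a₂ → a₁ < a₂) ∧
    (∀ δ₁ δ₂ a₁ a₂ : ℝ, 0 < δ₁ → δ₁ < δ₂ →
      θ < (r₀ * v' 0 - c) * (ρ + δ₁) / (q * β) →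
      a₁ ∈ Set.Ioo (0:ℝ) M → a₂ ∈ Set.Ioo (0:ℝ) M →
      FOCchar r₀ c q v v' ρ δ₁ β θ a₁ → FOCchar r₀ c q v v' ρ δ₂ β θ a₂ → a₁ < a₂) ∧
    (∀ β₁ β₂ a₁ a₂ : ℝ, 0 < β₁ → β₁ < β₂ →
      θ < (r₀ * v' 0 - c) * (ρ + δ) / (q * β₁) →
      a₁ ∈ Set.Ioo (0:ℝ) M → a₂ ∈ Set.Ioo (0:ℝ) M →
      FOCchar r₀ c q v v' ρ δ β₁ θ a₁ → FOCchar r₀ c q v v' ρ δ β₂ θ a₂ → a₂ < a₁) := by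
  have hθ0 := hθ.1
  refine ⟨?_, ?_, ?_⟩
  · intro ρ₁ ρ₂ a₁ a₂ hρ₁ hρ₁₂ _ ha₁ ha₂ hf1 hf2
    unfold FOCchar at hf1 hf2
    have hbt : 0 < β * θ := mul_pos hβ hθ0
    refine aux_main hr₀ hq hder1 hder2 hv''neg hv0 hvM
      (div_pos (by linarith) hbt) (div_pos (by linarith) hbt)
      (div_lt_div_of_pos_right (by linarith) hbt) ha₁ ha₂ hf1 hf2
  · intro δ₁ δ₂ a₁ a₂ hδ₁ hδ₁₂ _ ha₁ ha₂ hf1 hf2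
    unfold FOCchar at hf1 hf2
    have hbt : 0 < β * θ := mul_pos hβ hθ0
    exact aux_main hr₀ hq hder1 hder2 hv''neg hv0 hvM
      (div_pos (by linarith) hbt) (div_pos (by linarith) hbt)
      (div_lt_div_of_pos_right (by linarith) hbt) ha₁ ha₂ hf1 hf2
  · intro β₁ β₂ a₁ a₂ hβ₁ hβ₁₂ _ ha₁ ha₂ hf1 hf2
    unfold FOCchar at hf1 hf2
    have hbt₁ : 0 < β₁ * θ := mul_pos hβ₁ hθ0
    have hbt₂ : 0 < β₂ * θ := mul_pos (lt_trans hβ₁ hβ₁₂) hθ0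
    exact aux_main hr₀ hq hder1 hder2 hv''neg hv0 hvM
      (div_pos (by linarith) hbt₂) (div_pos (by linarith) hbt₁)
      (div_lt_div_of_pos_left (by linarith) hbt₁
        (by nlinarith)) ha₂ ha₁ hf2 hf1
end

section
/- Consider the ODE dθ/dt = θ((1-θ)βa - δ) on [0,1] with constant participation level a > 0 and β, δ > 0, with initial condition θ(0) = θ₀ ∈ (0,1]. If β/δ ≤ 1/a, then θ(t) → 0 as t → ∞; if β/δ > 1/a, then θ(t) → 1 - δ/(βa) as t → ∞. -/
open Filter Set Real

/-- The SIS vector field is Lipschitz on `[0,1]`. -/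
lemma sis_lip (b d : ℝ) (hb : 0 ≤ b) (hd : 0 ≤ d) :
    LipschitzOnWith (Real.toNNReal (3*b + d)) (fun x : ℝ => x * ((1 - x) * b - d))
      (Set.Icc (0:ℝ) 1) := by
  apply LipschitzOnWith.of_dist_le_mul
  intro x hx y hy
  rw [Real.dist_eq, Real.dist_eq, Real.coe_toNNReal _ (by positivity)]
  have h1 : x * ((1 - x) * b - d) - y * ((1 - y) * b - d)
      = (x - y) * ((b - d) - b * (x + y)) := by ring
  rw [h1, abs_mul, mul_comm]
  apply mul_le_mul_of_nonneg_right _ (abs_nonneg _)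
  rw [abs_le]
  obtain ⟨hx0, hx1⟩ := hx
  obtain ⟨hy0, hy1⟩ := hy
  constructor <;> nlinarith

/-- Uniqueness transfer: a solution staying in `[0,1]` has the same limit as an
explicit solution with the same initial value. -/
lemma sis_limit_congr (v : ℝ → ℝ) (K : NNReal) (hv : LipschitzOnWith K v (Set.Icc (0:ℝ) 1))
    (θ φ : ℝ → ℝ)
    (hθd : ∀ t, 0 ≤ t → HasDerivAt θ (v (θ t)) t)
    (hθm : ∀ t, 0 ≤ t → θ t ∈ Set.Icc (0:ℝ) 1)
    (hφd : ∀ t, 0 ≤ t → HasDerivAt φ (v (φ t)) t)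
    (hφm : ∀ t, 0 ≤ t → φ t ∈ Set.Icc (0:ℝ) 1)
    (h0 : φ 0 = θ 0) {L : ℝ} (hL : Filter.Tendsto φ Filter.atTop (nhds L)) :
    Filter.Tendsto θ Filter.atTop (nhds L) := by
  apply hL.congr'
  filter_upwards [eventually_ge_atTop (0:ℝ)] with t ht
  exact ODE_solution_unique_of_mem_Icc_right (v := fun _ x => v x)
    (s := fun _ => Set.Icc (0:ℝ) 1) (fun _ _ => hv)
    (fun s hs => (hφd s hs.1).continuousAt.continuousWithinAt)
    (fun s hs => (hφd s hs.1).hasDerivWithinAt)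
    (fun s hs => hφm s hs.1)
    (fun s hs => (hθd s hs.1).continuousAt.continuousWithinAt)
    (fun s hs => (hθd s hs.1).hasDerivWithinAt)
    (fun s hs => hθm s hs.1)
    h0 ⟨ht, le_refl t⟩

/-- derivative of the explicit logistic solution, `r ≠ 0` case. -/
lemma sis_phi_deriv (r b c t : ℝ) (hD : b + c * Real.exp (-r * t) ≠ 0) :
    HasDerivAt (fun t => r / (b + c * Real.exp (-r * t)))
      ((r / (b + c * Real.exp (-r * t))) *
        ((1 - r / (b + c * Real.exp (-r * t))) * b - (b - r))) t := by
  have hDd : HasDerivAt (fun t : ℝ => b + c * Real.exp (-r * t))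
      (c * (Real.exp (-r * t) * (-r))) t := by
    have h1 : HasDerivAt (fun t : ℝ => -r * t) (-r) t := by
      simpa using (hasDerivAt_id t).const_mul (-r)
    exact ((h1.exp).const_mul c).const_add b
  have := (hasDerivAt_const t r).div hDd hD
  refine this.congr_deriv ?_
  have hD' : b + c * Real.exp (-(r * t)) ≠ 0 := by rwa [neg_mul] at hD
  field_simp [hD, hD']
  ring

/-- SIS dynamics with a fixed common participation level `a`: below the critical
effective infection rate `1/a` the infection dies out, above it the state converges
to `1 - δ/(βa)`. -/
theorem sis_fixed_action_convergence
    (β δ a : ℝ) (hβ : 0 < β) (hδ : 0 < δ) (ha : 0 < a)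
    (θ : ℝ → ℝ) (hθ0 : θ 0 ∈ Set.Ioc (0:ℝ) 1)
    (hmem : ∀ t, 0 ≤ t → θ t ∈ Set.Icc (0:ℝ) 1)
    (hode : ∀ t, 0 ≤ t → HasDerivAt θ (θ t * ((1 - θ t) * β * a - δ)) t) :
    (β / δ ≤ 1 / a → Filter.Tendsto θ Filter.atTop (nhds 0)) ∧
    (β / δ > 1 / a → Filter.Tendsto θ Filter.atTop (nhds (1 - δ / (β * a)))) := by
  obtain ⟨hθ0pos, hθ0le⟩ := hθ0
  obtain ⟨b, hbeq, hb⟩ : ∃ b : ℝ, b = β * a ∧ 0 < b := ⟨β * a, rfl, by positivity⟩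
  obtain ⟨θ₀, hθeq, hθ0pos, hθ0le⟩ : ∃ x : ℝ, x = θ 0 ∧ 0 < x ∧ x ≤ 1 :=
    ⟨θ 0, rfl, hθ0pos, hθ0le⟩
  have hlip := sis_lip b δ hb.le hδ.le
  have hθd : ∀ t, 0 ≤ t → HasDerivAt θ ((fun x => x * ((1 - x) * b - δ)) (θ t)) t := by
    intro t ht
    simpa [hbeq, mul_assoc] using hode t ht
  constructor
  · -- subcritical: β * a ≤ δ
    intro h
    have hba : b ≤ δ := by
      rw [div_le_div_iff₀ hδ ha] at h
      rw [hbeq]; linarith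
    rcases eq_or_lt_of_le hba with heq | hlt
    · -- critical case b = δ
      set φ : ℝ → ℝ := fun t => θ₀ / (1 + b * θ₀ * t) with hφdef
      have hφapp : ∀ s : ℝ, φ s = θ₀ / (1 + b * θ₀ * s) := fun s => by rw [hφdef]
      clear_value φ
      have hden : ∀ t : ℝ, 0 ≤ t → 0 < 1 + b * θ₀ * t := by
        intro t ht; have : 0 ≤ b * θ₀ * t := by positivity
        linarith
      have hφd : ∀ t, 0 ≤ t → HasDerivAt φ ((fun x => x * ((1 - x) * b - δ)) (φ t)) t := by
        intro t ht
        have hne : (1 + b * θ₀ * t) ≠ 0 := (hden t ht).ne'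
        have hne2 : (1 : ℝ) + θ₀ * b * t ≠ 0 := by rw [mul_comm θ₀ b]; exact hne
        have hDd : HasDerivAt (fun t : ℝ => 1 + b * θ₀ * t) (b * θ₀) t := by
          simpa using ((hasDerivAt_id t).const_mul (b * θ₀)).const_add 1
        have hd := (hasDerivAt_const t θ₀).div hDd hne
        have hfun : φ = fun s => θ₀ / (1 + b * θ₀ * s) := funext hφapp
        rw [hfun]
        refine hd.congr_deriv ?_
        rw [← heq]
        field_simp [hne, hne2]
        ring
      have hφm : ∀ t, 0 ≤ t → φ t ∈ Set.Icc (0:ℝ) 1 := by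
        intro t ht
        have hpos := hden t ht
        rw [Set.mem_Icc, hφapp]
        constructor
        · positivity
        · rw [div_le_one hpos]
          have : 0 ≤ b * θ₀ * t := by positivity
          linarith
      have hφ0 : φ 0 = θ 0 := by
        rw [hφapp]; simp [hθeq]
      have hφL : Filter.Tendsto φ Filter.atTop (nhds 0) := by
        have h1 : Filter.Tendsto (fun t : ℝ => θ₀ / (1 + b * θ₀ * t)) Filter.atTop (nhds 0) := by
          apply Filter.Tendsto.div_atTop (tendsto_const_nhds)
          apply tendsto_atTop_add_const_left
          exact Filter.Tendsto.const_mul_atTop (by positivity) tendsto_id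
        exact h1.congr fun t => (hφapp t).symm
      exact sis_limit_congr _ _ hlip θ φ hθd hmem hφd hφm hφ0 hφL
    · -- b < δ : r < 0
      obtain ⟨r, hreq, hr⟩ : ∃ r : ℝ, r = b - δ ∧ r < 0 := ⟨b - δ, rfl, by linarith⟩
      obtain ⟨c, hceq⟩ : ∃ c : ℝ, c = r / θ₀ - b := ⟨_, rfl⟩
      have hrθ0 : r / θ₀ < 0 := div_neg_of_neg_of_pos hr hθ0pos
      have hcneg : c < 0 := by rw [hceq]; linarith
      set D : ℝ → ℝ := fun t => b + c * Real.exp (-r * t) with hDdef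
      have hDapp : ∀ s : ℝ, D s = b + c * Real.exp (-r * s) := fun s => by rw [hDdef]
      clear_value D
      have hDneg : ∀ t : ℝ, 0 ≤ t → D t ≤ r / θ₀ := by
        intro t ht
        have hE : 1 ≤ Real.exp (-r * t) := by
          apply Real.one_le_exp; nlinarith
        have h2 : c * Real.exp (-r * t) ≤ c := by
          simpa using mul_le_mul_of_nonpos_left hE hcneg.le
        rw [hDapp t]
        have h3 : c = r / θ₀ - b := hceq
        linarith
      have hDne : ∀ t : ℝ, 0 ≤ t → D t ≠ 0 := fun t ht =>
        (lt_of_le_of_lt (hDneg t ht) hrθ0).ne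
      set φ : ℝ → ℝ := fun t => r / D t with hφdef
      have hφapp : ∀ s : ℝ, φ s = r / D s := fun s => by rw [hφdef]
      clear_value φ
      have hfun : φ = fun s => r / (b + c * Real.exp (-r * s)) := by
        funext s; rw [hφapp, hDapp]
      have hφd : ∀ t, 0 ≤ t → HasDerivAt φ ((fun x => x * ((1 - x) * b - δ)) (φ t)) t := by
        intro t ht
        have hne : b + c * Real.exp (-r * t) ≠ 0 := by rw [← hDapp]; exact hDne t ht
        have hd := sis_phi_deriv r b c t hne
        have hδr : δ = b - r := by rw [hreq]; ring
        rw [hδr, hfun]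
        exact hd
      have hrr : r / θ₀ ≤ r := by
        rw [div_le_iff₀ hθ0pos]
        have := mul_le_mul_of_nonpos_left hθ0le hr.le
        linarith
      have hφm : ∀ t, 0 ≤ t → φ t ∈ Set.Icc (0:ℝ) 1 := by
        intro t ht
        have hDt : D t < 0 := lt_of_le_of_lt (hDneg t ht) hrθ0
        rw [Set.mem_Icc, hφapp]
        refine ⟨(div_pos_of_neg_of_neg hr hDt).le, ?_⟩
        rw [div_le_one_iff]
        right; right
        exact ⟨hDt, by linarith [hDneg t ht]⟩
      have hφ0 : φ 0 = θ 0 := by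
        have h0 : φ 0 = r / (r / θ₀) := by
          rw [hφapp, hDapp]; simp [hceq]
        rw [h0, div_div_eq_mul_div, mul_comm r θ₀, mul_div_assoc, div_self hr.ne,
          mul_one, hθeq]
      have hφL : Filter.Tendsto φ Filter.atTop (nhds 0) := by
        have hDbot : Filter.Tendsto D Filter.atTop Filter.atBot := by
          have h1 : Filter.Tendsto (fun t : ℝ => b + c * Real.exp (-r * t))
              Filter.atTop Filter.atBot := by
            apply tendsto_atBot_add_const_left
            apply Filter.Tendsto.const_mul_atTop_of_neg hcneg
            exact Real.tendsto_exp_atTop.comp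
              (Filter.Tendsto.const_mul_atTop (by linarith : (0:ℝ) < -r) tendsto_id)
          exact h1.congr fun t => (hDapp t).symm
        have hnegD : Filter.Tendsto (fun t => -D t) Filter.atTop Filter.atTop :=
          tendsto_neg_atBot_atTop.comp hDbot
        have h2 := Filter.Tendsto.div_atTop (tendsto_const_nhds (x := -r)) hnegD
        apply h2.congr
        intro t
        rw [neg_div_neg_eq, hφapp]
      exact sis_limit_congr _ _ hlip θ φ hθd hmem hφd hφm hφ0 hφL
  · -- supercritical
    intro h
    have hba : δ < b := by
      rw [gt_iff_lt, div_lt_div_iff₀ ha hδ] at h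
      rw [hbeq]; linarith
    obtain ⟨r, hreq, hr⟩ : ∃ r : ℝ, r = b - δ ∧ 0 < r := ⟨b - δ, rfl, by linarith⟩
    obtain ⟨c, hceq⟩ : ∃ c : ℝ, c = r / θ₀ - b := ⟨_, rfl⟩
    set D : ℝ → ℝ := fun t => b + c * Real.exp (-r * t) with hDdef
    have hDapp : ∀ s : ℝ, D s = b + c * Real.exp (-r * s) := fun s => by rw [hDdef]
    clear_value D
    have hDlb : ∀ t : ℝ, 0 ≤ t → min b (r / θ₀) ≤ D t := by
      intro t ht
      have hE0 : 0 < Real.exp (-r * t) := Real.exp_pos _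
      have hE1 : Real.exp (-r * t) ≤ 1 := by
        have := Real.exp_le_exp.mpr (show -r * t ≤ 0 by nlinarith)
        simpa using this
      rw [hDapp t]
      rcases le_or_gt 0 c with hc0 | hc0
      · have h2 : 0 ≤ c * Real.exp (-r * t) := by positivity
        calc min b (r/θ₀) ≤ b := min_le_left _ _
          _ ≤ b + c * Real.exp (-r * t) := by linarith
      · have h2 : c * 1 ≤ c * Real.exp (-r * t) := mul_le_mul_of_nonpos_left hE1 hc0.le
        have h3 : c = r / θ₀ - b := hceq
        calc min b (r/θ₀) ≤ r/θ₀ := min_le_right _ _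
          _ ≤ b + c * Real.exp (-r * t) := by linarith
    have hmin : 0 < min b (r / θ₀) := lt_min hb (div_pos hr hθ0pos)
    have hrmin : r ≤ min b (r / θ₀) := by
      apply le_min (by rw [hreq]; linarith)
      rw [le_div_iff₀ hθ0pos]
      nlinarith [mul_le_mul_of_nonneg_left hθ0le hr.le]
    have hDpos : ∀ t : ℝ, 0 ≤ t → 0 < D t := fun t ht => lt_of_lt_of_le hmin (hDlb t ht)
    set φ : ℝ → ℝ := fun t => r / D t with hφdef
    have hφapp : ∀ s : ℝ, φ s = r / D s := fun s => by rw [hφdef]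
    clear_value φ
    have hfun : φ = fun s => r / (b + c * Real.exp (-r * s)) := by
      funext s; rw [hφapp, hDapp]
    have hφd : ∀ t, 0 ≤ t → HasDerivAt φ ((fun x => x * ((1 - x) * b - δ)) (φ t)) t := by
      intro t ht
      have hne : b + c * Real.exp (-r * t) ≠ 0 := by rw [← hDapp]; exact (hDpos t ht).ne'
      have hd := sis_phi_deriv r b c t hne
      have hδr : δ = b - r := by rw [hreq]; ring
      rw [hδr, hfun]
      exact hd
    have hφm : ∀ t, 0 ≤ t → φ t ∈ Set.Icc (0:ℝ) 1 := by
      intro t ht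
      have hDt := hDpos t ht
      rw [Set.mem_Icc, hφapp]
      constructor
      · positivity
      · rw [div_le_one hDt]
        linarith [hDlb t ht]
    have hφ0 : φ 0 = θ 0 := by
      have h0 : φ 0 = r / (r / θ₀) := by
        rw [hφapp, hDapp]; simp [hceq]
      rw [h0, div_div_eq_mul_div, mul_comm r θ₀, mul_div_assoc, div_self hr.ne',
        mul_one, hθeq]
    have hφL : Filter.Tendsto φ Filter.atTop (nhds (1 - δ / (β * a))) := by
      have hDlim : Filter.Tendsto D Filter.atTop (nhds b) := by
        have hexp : Filter.Tendsto (fun t : ℝ => Real.exp (-r * t)) Filter.atTop (nhds 0) := by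
          apply Real.tendsto_exp_atBot.comp
          exact Filter.Tendsto.const_mul_atTop_of_neg (by linarith : -r < 0) tendsto_id
        have h1 := (hexp.const_mul c).const_add b
        have h2 : Filter.Tendsto (fun t : ℝ => b + c * Real.exp (-r * t))
            Filter.atTop (nhds b) := by simpa using h1
        exact h2.congr fun t => (hDapp t).symm
      have h3 := Filter.Tendsto.div (tendsto_const_nhds (x := r)) hDlim hb.ne'
      have hval : r / b = 1 - δ / (β * a) := by
        rw [← hbeq, hreq]
        field_simp
      rw [← hval]
      exact h3.congr fun t => (hφapp t).symm
    exact sis_limit_congr _ _ hlip θ φ hθd hmem hφd hφm hφ0 hφL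
end

section
/- Let a*: [0,1] → [0,M] be continuous, nonincreasing, with a*(θ) = 0 for θ ≥ θ̄ (for some θ̄ ∈ (0,1]), and a*(0) = a^AF > 0. Consider dθ/dt = θ((1-θ)βa*(θ) - δ) with θ(0) ∈ (0,1]. If β a^AF < δ, then θ(t) → 0. If β a^AF ≥ δ, assume additionally θ ↦ (1-θ)βa*(θ) - δ is strictly decreasing on [0, θ̄); then there exists a unique θ† ∈ [0, θ̄) with (1-θ†)βa*(θ†) = δ, and θ(t) → θ† as t → ∞ for any initial condition θ(0) ∈ (0,1]. -/
open Set Filter Topology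


/-- Trapping from above: if the drift is nonpositive above `c` and we start at or below `c`,
we stay at or below `c`. -/
lemma sis_trap_le {c : ℝ} {F θ : ℝ → ℝ}
    (hode : ∀ t, 0 ≤ t → HasDerivAt θ (F (θ t)) t)
    (hmem : ∀ t, 0 ≤ t → θ t ∈ Set.Icc (0:ℝ) 1)
    (hFneg : ∀ s, c < s → s ≤ 1 → F s ≤ 0)
    (h0 : θ 0 ≤ c) : ∀ t, 0 ≤ t → θ t ≤ c := by
  intro t1 ht1
  by_contra hgt
  push_neg at hgt
  have hcontθ : ContinuousOn θ (Icc 0 t1) := fun t ht =>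
    ((hode t ht.1).continuousAt).continuousWithinAt
  set S : Set ℝ := Icc 0 t1 ∩ θ ⁻¹' Iic c with hSdef
  have hSne : S.Nonempty := ⟨0, ⟨le_refl 0, ht1⟩, h0⟩
  have hSclosed : IsClosed S :=
    hcontθ.preimage_isClosed_of_isClosed isClosed_Icc isClosed_Iic
  have hScompact : IsCompact S :=
    isCompact_Icc.of_isClosed_subset hSclosed inter_subset_left
  have ht2S : sSup S ∈ S := hScompact.sSup_mem hSne
  set t2 := sSup S with ht2def
  have ht2mem : t2 ∈ Icc 0 t1 := ht2S.1
  have hθt2 : θ t2 ≤ c := ht2S.2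
  have ht2lt : t2 < t1 := lt_of_le_of_ne ht2mem.2 (by
    intro h; rw [h] at hθt2; exact absurd hθt2 (not_le.2 hgt))
  have hSbdd : BddAbove S := ⟨t1, fun x hx => hx.1.2⟩
  have hmid : ∀ t ∈ Ioc t2 t1, c < θ t := by
    intro t ht
    by_contra hle
    push_neg at hle
    have : t ∈ S := ⟨⟨le_trans ht2mem.1 ht.1.le, ht.2⟩, hle⟩
    exact absurd (le_csSup hSbdd this) (not_le.2 ht.1)
  have hθanti : AntitoneOn θ (Icc t2 t1) := by
    apply antitoneOn_of_deriv_nonpos (convex_Icc t2 t1)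
    · exact hcontθ.mono (Icc_subset_Icc ht2mem.1 le_rfl)
    · intro t ht
      rw [interior_Icc] at ht
      exact ((hode t (le_trans ht2mem.1 ht.1.le)).differentiableAt).differentiableWithinAt
    · intro t ht
      rw [interior_Icc] at ht
      have ht0 : (0:ℝ) ≤ t := le_trans ht2mem.1 ht.1.le
      rw [(hode t ht0).deriv]
      exact hFneg _ (hmid t ⟨ht.1, ht.2.le⟩) (hmem t ht0).2
  have := hθanti ⟨le_refl t2, ht2lt.le⟩ ⟨ht2lt.le, le_refl t1⟩ ht2lt.le
  exact absurd (le_trans this hθt2) (not_le.2 hgt)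

/-- Trapping from below. -/
lemma sis_trap_ge {c : ℝ} {F θ : ℝ → ℝ}
    (hode : ∀ t, 0 ≤ t → HasDerivAt θ (F (θ t)) t)
    (hmem : ∀ t, 0 ≤ t → θ t ∈ Set.Icc (0:ℝ) 1)
    (hFpos : ∀ s, 0 ≤ s → s < c → 0 ≤ F s)
    (h0 : c ≤ θ 0) : ∀ t, 0 ≤ t → c ≤ θ t := by
  intro t1 ht1
  by_contra hgt
  push_neg at hgt
  have hcontθ : ContinuousOn θ (Icc 0 t1) := fun t ht =>
    ((hode t ht.1).continuousAt).continuousWithinAt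
  set S : Set ℝ := Icc 0 t1 ∩ θ ⁻¹' Ici c with hSdef
  have hSne : S.Nonempty := ⟨0, ⟨le_refl 0, ht1⟩, h0⟩
  have hSclosed : IsClosed S :=
    hcontθ.preimage_isClosed_of_isClosed isClosed_Icc isClosed_Ici
  have hScompact : IsCompact S :=
    isCompact_Icc.of_isClosed_subset hSclosed inter_subset_left
  have ht2S : sSup S ∈ S := hScompact.sSup_mem hSne
  set t2 := sSup S with ht2def
  have ht2mem : t2 ∈ Icc 0 t1 := ht2S.1
  have hθt2 : c ≤ θ t2 := ht2S.2
  have ht2lt : t2 < t1 := lt_of_le_of_ne ht2mem.2 (by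
    intro h; rw [h] at hθt2; exact absurd hθt2 (not_le.2 hgt))
  have hSbdd : BddAbove S := ⟨t1, fun x hx => hx.1.2⟩
  have hmid : ∀ t ∈ Ioc t2 t1, θ t < c := by
    intro t ht
    by_contra hle
    push_neg at hle
    have : t ∈ S := ⟨⟨le_trans ht2mem.1 ht.1.le, ht.2⟩, hle⟩
    exact absurd (le_csSup hSbdd this) (not_le.2 ht.1)
  have hθmono : MonotoneOn θ (Icc t2 t1) := by
    apply monotoneOn_of_deriv_nonneg (convex_Icc t2 t1)
    · exact hcontθ.mono (Icc_subset_Icc ht2mem.1 le_rfl)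
    · intro t ht
      rw [interior_Icc] at ht
      exact ((hode t (le_trans ht2mem.1 ht.1.le)).differentiableAt).differentiableWithinAt
    · intro t ht
      rw [interior_Icc] at ht
      have ht0 : (0:ℝ) ≤ t := le_trans ht2mem.1 ht.1.le
      rw [(hode t ht0).deriv]
      exact hFpos _ (hmem t ht0).1 (hmid t ⟨ht.1, ht.2.le⟩)
  have := hθmono ⟨le_refl t2, ht2lt.le⟩ ⟨ht2lt.le, le_refl t1⟩ ht2lt.le
  exact absurd (le_trans hθt2 this) (not_le.2 hgt)


/-- If the drift along the trajectory is nonnegative, the solution converges monotonically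
to a zero of the drift. -/
lemma sis_mono_limit {F θ : ℝ → ℝ}
    (hF : ContinuousOn F (Set.Icc 0 1))
    (hode : ∀ t, 0 ≤ t → HasDerivAt θ (F (θ t)) t)
    (hmem : ∀ t, 0 ≤ t → θ t ∈ Set.Icc (0:ℝ) 1)
    (hsign : ∀ t, 0 ≤ t → 0 ≤ F (θ t)) :
    ∃ L ∈ Set.Icc (0:ℝ) 1, θ 0 ≤ L ∧ (∀ t, 0 ≤ t → θ t ≤ L) ∧
      Filter.Tendsto θ Filter.atTop (nhds L) ∧ F L = 0 := by
  have hcontθ : ∀ t ∈ Ici (0:ℝ), ContinuousWithinAt θ (Ici 0) t := fun t ht =>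
    ((hode t ht).continuousAt).continuousWithinAt
  have hmono : MonotoneOn θ (Ici 0) := by
    apply monotoneOn_of_deriv_nonneg (convex_Ici 0) hcontθ
    · intro t ht
      rw [interior_Ici] at ht
      exact ((hode t ht.le).differentiableAt).differentiableWithinAt
    · intro t ht
      rw [interior_Ici] at ht
      rw [(hode t ht.le).deriv]
      exact hsign t ht.le
  set ψ : ℝ → ℝ := fun t => θ (max t 0) with hψ
  have hψmono : Monotone ψ := fun s t hst =>
    hmono (le_max_right s 0) (le_max_right t 0) (max_le_max hst le_rfl)
  have hψbdd : BddAbove (range ψ) := by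
    refine ⟨1, ?_⟩
    rintro x ⟨t, rfl⟩
    exact (hmem _ (le_max_right t 0)).2
  set L := ⨆ t, ψ t with hL
  have htendψ : Tendsto ψ atTop (nhds L) := tendsto_atTop_ciSup hψmono hψbdd
  have heq : ψ =ᶠ[atTop] θ :=
    (eventually_ge_atTop (0:ℝ)).mono fun t ht => by simp [hψ, max_eq_left ht]
  have htendθ : Tendsto θ atTop (nhds L) := htendψ.congr' heq
  have hle : ∀ t, 0 ≤ t → θ t ≤ L := by
    intro t ht
    have h1 : ψ t = θ t := by simp only [hψ]; rw [max_eq_left ht]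
    exact h1 ▸ le_ciSup hψbdd t
  have h0L : θ 0 ≤ L := hle 0 le_rfl
  have hL1 : L ≤ 1 := ciSup_le fun t => (hmem _ (le_max_right t 0)).2
  have hLmem : L ∈ Icc (0:ℝ) 1 := ⟨le_trans (hmem 0 le_rfl).1 h0L, hL1⟩
  refine ⟨L, hLmem, h0L, hle, htendθ, ?_⟩
  -- F L = 0
  have htendθ' : Tendsto θ atTop (𝓝[Set.Icc (0:ℝ) 1] L) := by
    apply tendsto_nhdsWithin_of_tendsto_nhds_of_eventually_within _ htendθ
    exact (eventually_ge_atTop (0:ℝ)).mono hmem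
  have htendF : Tendsto (fun t => F (θ t)) atTop (nhds (F L)) :=
    ((hF L hLmem).tendsto).comp htendθ'
  have hFL0 : 0 ≤ F L :=
    ge_of_tendsto htendF ((eventually_ge_atTop (0:ℝ)).mono hsign)
  rcases eq_or_lt_of_le hFL0 with h | h
  · exact h.symm
  exfalso
  set ε := F L / 2 with hε
  have hεpos : 0 < ε := by positivity
  have hev : ∀ᶠ t in atTop, ε < F (θ t) := htendF.eventually (eventually_gt_nhds (by linarith))
  obtain ⟨T₀, hT₀⟩ := hev.exists_forall_of_atTop
  set T := max T₀ 0 with hT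
  have hT0 : (0:ℝ) ≤ T := le_max_right _ _
  have hTε : ∀ t, T ≤ t → ε ≤ F (θ t) := fun t ht =>
    (hT₀ t (le_trans (le_max_left _ _) ht)).le
  have hgmono : MonotoneOn (fun t => θ t - ε * t) (Ici T) := by
    apply monotoneOn_of_deriv_nonneg (convex_Ici T)
    · intro t ht
      have hd : HasDerivAt (fun s => θ s - ε * s) (F (θ t) - ε * 1) t :=
        (hode t (le_trans hT0 ht)).sub ((hasDerivAt_id t).const_mul ε)
      exact hd.continuousAt.continuousWithinAt
    · intro t ht
      rw [interior_Ici] at ht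
      have hd : HasDerivAt (fun s => θ s - ε * s) (F (θ t) - ε * 1) t :=
        (hode t (le_trans hT0 ht.le)).sub ((hasDerivAt_id t).const_mul ε)
      exact hd.differentiableAt.differentiableWithinAt
    · intro t ht
      rw [interior_Ici] at ht
      have hd : HasDerivAt (fun s => θ s - ε * s) (F (θ t) - ε * 1) t :=
        (hode t (le_trans hT0 ht.le)).sub ((hasDerivAt_id t).const_mul ε)
      rw [hd.deriv]
      have := hTε t ht.le
      linarith
  have hstep : T ≤ T + 2 / ε := le_add_of_nonneg_right (by positivity)
  have key := hgmono (self_mem_Ici) hstep hstep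
  simp only at key
  have h1 : θ (T + 2 / ε) ≤ 1 := (hmem _ (le_trans hT0 hstep)).2
  have h2 : 0 ≤ θ T := (hmem _ hT0).1
  have h3 : ε * (2 / ε) = 2 := by field_simp
  nlinarith [key]


lemma sis_anti_limit {F θ : ℝ → ℝ}
    (hF : ContinuousOn F (Set.Icc 0 1))
    (hode : ∀ t, 0 ≤ t → HasDerivAt θ (F (θ t)) t)
    (hmem : ∀ t, 0 ≤ t → θ t ∈ Set.Icc (0:ℝ) 1)
    (hsign : ∀ t, 0 ≤ t → F (θ t) ≤ 0) :
    ∃ L ∈ Set.Icc (0:ℝ) 1, L ≤ θ 0 ∧ (∀ t, 0 ≤ t → L ≤ θ t) ∧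
      Filter.Tendsto θ Filter.atTop (nhds L) ∧ F L = 0 := by
  have hcontθ : ∀ t ∈ Ici (0:ℝ), ContinuousWithinAt θ (Ici 0) t := fun t ht =>
    ((hode t ht).continuousAt).continuousWithinAt
  have hanti : AntitoneOn θ (Ici 0) := by
    apply antitoneOn_of_deriv_nonpos (convex_Ici 0) hcontθ
    · intro t ht
      rw [interior_Ici] at ht
      exact ((hode t ht.le).differentiableAt).differentiableWithinAt
    · intro t ht
      rw [interior_Ici] at ht
      rw [(hode t ht.le).deriv]
      exact hsign t ht.le
  set ψ : ℝ → ℝ := fun t => θ (max t 0) with hψ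
  have hψanti : Antitone ψ := fun s t hst =>
    hanti (le_max_right s 0) (le_max_right t 0) (max_le_max hst le_rfl)
  have hψbdd : BddBelow (range ψ) := by
    refine ⟨0, ?_⟩
    rintro x ⟨t, rfl⟩
    exact (hmem _ (le_max_right t 0)).1
  set L := ⨅ t, ψ t with hL
  have htendψ : Tendsto ψ atTop (nhds L) := tendsto_atTop_ciInf hψanti hψbdd
  have heq : ψ =ᶠ[atTop] θ :=
    (eventually_ge_atTop (0:ℝ)).mono fun t ht => by simp [hψ, max_eq_left ht]
  have htendθ : Tendsto θ atTop (nhds L) := htendψ.congr' heq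
  have hge : ∀ t, 0 ≤ t → L ≤ θ t := by
    intro t ht
    have h1 : ψ t = θ t := by simp only [hψ]; rw [max_eq_left ht]
    exact h1 ▸ ciInf_le hψbdd t
  have h0L : L ≤ θ 0 := hge 0 le_rfl
  have hL0 : 0 ≤ L := le_ciInf fun t => (hmem _ (le_max_right t 0)).1
  have hLmem : L ∈ Icc (0:ℝ) 1 := ⟨hL0, le_trans h0L (hmem 0 le_rfl).2⟩
  refine ⟨L, hLmem, h0L, hge, htendθ, ?_⟩
  have htendθ' : Tendsto θ atTop (𝓝[Set.Icc (0:ℝ) 1] L) := by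
    apply tendsto_nhdsWithin_of_tendsto_nhds_of_eventually_within _ htendθ
    exact (eventually_ge_atTop (0:ℝ)).mono hmem
  have htendF : Tendsto (fun t => F (θ t)) atTop (nhds (F L)) :=
    ((hF L hLmem).tendsto).comp htendθ'
  have hFL0 : F L ≤ 0 :=
    le_of_tendsto htendF ((eventually_ge_atTop (0:ℝ)).mono hsign)
  rcases eq_or_lt_of_le hFL0 with h | h
  · exact h
  exfalso
  set ε := -F L / 2 with hε
  have hεpos : 0 < ε := by simp only [hε]; linarith
  have hev : ∀ᶠ t in atTop, F (θ t) < -ε :=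
    htendF.eventually (eventually_lt_nhds (by simp only [hε]; linarith))
  obtain ⟨T₀, hT₀⟩ := hev.exists_forall_of_atTop
  set T := max T₀ 0 with hT
  have hT0 : (0:ℝ) ≤ T := le_max_right _ _
  have hTε : ∀ t, T ≤ t → F (θ t) ≤ -ε := fun t ht =>
    (hT₀ t (le_trans (le_max_left _ _) ht)).le
  have hganti : AntitoneOn (fun t => θ t + ε * t) (Ici T) := by
    apply antitoneOn_of_deriv_nonpos (convex_Ici T)
    · intro t ht
      have hd : HasDerivAt (fun s => θ s + ε * s) (F (θ t) + ε * 1) t :=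
        (hode t (le_trans hT0 ht)).add ((hasDerivAt_id t).const_mul ε)
      exact hd.continuousAt.continuousWithinAt
    · intro t ht
      rw [interior_Ici] at ht
      have hd : HasDerivAt (fun s => θ s + ε * s) (F (θ t) + ε * 1) t :=
        (hode t (le_trans hT0 ht.le)).add ((hasDerivAt_id t).const_mul ε)
      exact hd.differentiableAt.differentiableWithinAt
    · intro t ht
      rw [interior_Ici] at ht
      have hd : HasDerivAt (fun s => θ s + ε * s) (F (θ t) + ε * 1) t :=
        (hode t (le_trans hT0 ht.le)).add ((hasDerivAt_id t).const_mul ε)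
      rw [hd.deriv]
      have := hTε t ht.le
      linarith
  have hstep : T ≤ T + 2 / ε := le_add_of_nonneg_right (by positivity)
  have key := hganti (self_mem_Ici) hstep hstep
  simp only at key
  have h1 : 0 ≤ θ (T + 2 / ε) := (hmem _ (le_trans hT0 hstep)).1
  have h2 : θ T ≤ 1 := (hmem _ hT0).2
  have h3 : ε * (2 / ε) = 2 := by field_simp
  nlinarith [key]

section SISMain

variable {β δ θbar aAF : ℝ} {astar : ℝ → ℝ}

/-- Continuity of the drift. -/
lemma sis_F_cont (hcont : ContinuousOn astar (Set.Icc 0 1)) :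
    ContinuousOn (fun s => s * ((1 - s) * β * astar s - δ)) (Set.Icc (0:ℝ) 1) := by
  apply continuousOn_id.mul
  exact (((continuousOn_const.sub continuousOn_id).mul continuousOn_const).mul hcont).sub
    continuousOn_const

end SISMain



/-- SIS dynamics with strategic users choosing the best-response participation
level `a*(θ)`: if `β a^AF < δ` the infection dies out; if `β a^AF ≥ δ` (and the drift is
strictly decreasing below the threshold `θ̄`) the state converges to the unique
root `θ†` of `(1-θ)βa*(θ) = δ`. -/
theorem sis_strategic_convergence
    (β δ M θbar aAF : ℝ) (hβ : 0 < β) (hδ : 0 < δ) (hM : 0 < M)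
    (hθbar : θbar ∈ Set.Ioc (0:ℝ) 1)
    (astar : ℝ → ℝ)
    (hcont : ContinuousOn astar (Set.Icc 0 1))
    (hanti : AntitoneOn astar (Set.Icc 0 1))
    (hrange : ∀ s ∈ Set.Icc (0:ℝ) 1, astar s ∈ Set.Icc (0:ℝ) M)
    (hzero : ∀ s, θbar ≤ s → astar s = 0)
    (haAF : astar 0 = aAF) (haAFpos : 0 < aAF)
    (θ : ℝ → ℝ) (hθ0 : θ 0 ∈ Set.Ioc (0:ℝ) 1)
    (hmem : ∀ t, 0 ≤ t → θ t ∈ Set.Icc (0:ℝ) 1)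
    (hode : ∀ t, 0 ≤ t → HasDerivAt θ (θ t * ((1 - θ t) * β * astar (θ t) - δ)) t) :
    (β * aAF < δ → Filter.Tendsto θ Filter.atTop (nhds 0)) ∧
    (β * aAF ≥ δ →
      StrictAntiOn (fun s => (1 - s) * β * astar s - δ) (Set.Ico 0 θbar) →
      ∃ θd, θd ∈ Set.Ico 0 θbar ∧ (1 - θd) * β * astar θd = δ ∧
        (∀ θd' ∈ Set.Ico 0 θbar, (1 - θd') * β * astar θd' = δ → θd' = θd) ∧
        Filter.Tendsto θ Filter.atTop (nhds θd)) := by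
  set g : ℝ → ℝ := fun s => (1 - s) * β * astar s - δ with hg
  set F : ℝ → ℝ := fun s => s * g s with hF
  have hFcont : ContinuousOn F (Set.Icc 0 1) := sis_F_cont hcont
  have hode' : ∀ t, 0 ≤ t → HasDerivAt θ (F (θ t)) t := hode
  -- pointwise bound: g s ≤ β * aAF - δ on [0,1]
  have hgle : ∀ s ∈ Set.Icc (0:ℝ) 1, g s ≤ β * aAF - δ := by
    intro s hs
    have h0 : (0:ℝ) ∈ Set.Icc (0:ℝ) 1 := ⟨le_rfl, zero_le_one⟩
    have ha1 : astar s ≤ aAF := haAF ▸ hanti h0 hs hs.1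
    have ha0 : 0 ≤ astar s := (hrange s hs).1
    have h1s : 0 ≤ 1 - s := by linarith [hs.2]
    simp only [hg]
    nlinarith [mul_nonneg (mul_nonneg hs.1 hβ.le) ha0, mul_le_mul_of_nonneg_left ha1 hβ.le]
  constructor
  · -- Part 1 : extinction
    intro hlt
    have hsign : ∀ t, 0 ≤ t → F (θ t) ≤ 0 := by
      intro t ht
      have hmt := hmem t ht
      have := hgle (θ t) hmt
      exact mul_nonpos_of_nonneg_of_nonpos hmt.1 (by linarith)
    obtain ⟨L, hLmem, _, _, htend, hFL⟩ := sis_anti_limit hFcont hode' hmem hsign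
    have hgL : g L < 0 := by linarith [hgle L hLmem]
    have : L = 0 := by
      rcases mul_eq_zero.1 hFL with h | h
      · exact h
      · exact absurd h (ne_of_lt hgL)
    exact this ▸ htend
  · -- Part 2 : endemic equilibrium
    intro hge hsa
    have hθbar1 : θbar ≤ 1 := hθbar.2
    have hgcont : ContinuousOn g (Set.Icc 0 1) :=
      (((continuousOn_const.sub continuousOn_id).mul continuousOn_const).mul hcont).sub
        continuousOn_const
    have hg0 : g 0 = β * aAF - δ := by simp [hg, haAF]
    have hgθbar : g θbar = -δ := by simp [hg, hzero θbar le_rfl]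
    -- root existence by IVT
    have hIVT := intermediate_value_Icc' hθbar.1.le
      (hgcont.mono (Icc_subset_Icc le_rfl hθbar1))
    have h0mem : (0:ℝ) ∈ Set.Icc (g θbar) (g 0) := by
      rw [hg0, hgθbar]; constructor <;> linarith
    obtain ⟨c, hcmem, hgc⟩ := hIVT h0mem
    have hcθbar : c < θbar := lt_of_le_of_ne hcmem.2 (by
      intro h; rw [h, hgθbar] at hgc; linarith)
    have hcIco : c ∈ Set.Ico (0:ℝ) θbar := ⟨hcmem.1, hcθbar⟩
    -- sign of g away from the root
    have hgpos : ∀ s, 0 ≤ s → s < c → 0 < g s := by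
      intro s hs hsc
      have := hsa ⟨hs, lt_trans hsc hcθbar⟩ hcIco hsc
      rw [hgc] at this
      exact this
    have hgneg : ∀ s, c < s → s ≤ 1 → g s < 0 := by
      intro s hcs hs1
      by_cases hsθ : s < θbar
      · have := hsa hcIco ⟨le_trans hcmem.1 hcs.le, hsθ⟩ hcs
        rw [hgc] at this
        exact this
      · push_neg at hsθ
        simp only [hg, hzero s hsθ]
        simpa using hδ
    have hFpos : ∀ s, 0 ≤ s → s < c → 0 ≤ F s := fun s hs hsc =>
      mul_nonneg hs (hgpos s hs hsc).le
    have hFneg : ∀ s, c < s → s ≤ 1 → F s ≤ 0 := fun s hcs hs1 =>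
      mul_nonpos_of_nonneg_of_nonpos (le_trans hcmem.1 hcs.le) (hgneg s hcs hs1).le
    have hFc : F c = 0 := by simp [hF, hgc]
    -- convergence to c
    have htend : Filter.Tendsto θ Filter.atTop (nhds c) := by
      rcases le_or_gt (θ 0) c with hc0 | hc0
      · -- start below the root : monotone approach
        have htrap := sis_trap_le hode' hmem hFneg hc0
        have hsign : ∀ t, 0 ≤ t → 0 ≤ F (θ t) := by
          intro t ht
          rcases lt_or_eq_of_le (htrap t ht) with h | h
          · exact hFpos _ (hmem t ht).1 h
          · rw [h, hFc]
        obtain ⟨L, hLmem, h0L, hle, htend, hFL⟩ := sis_mono_limit hFcont hode' hmem hsign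
        have hLc : L ≤ c := le_of_tendsto htend ((eventually_ge_atTop (0:ℝ)).mono htrap)
        have hLpos : 0 < L := lt_of_lt_of_le hθ0.1 h0L
        have hgL : g L = 0 := by
          rcases mul_eq_zero.1 hFL with h | h
          · exact absurd h (ne_of_gt hLpos)
          · exact h
        have : L = c := by
          rcases lt_or_eq_of_le hLc with h | h
          · exact absurd hgL (ne_of_gt (hgpos L hLmem.1 h))
          · exact h
        exact this ▸ htend
      · -- start above the root : antitone approach
        have htrap := sis_trap_ge hode' hmem hFpos hc0.le
        have hsign : ∀ t, 0 ≤ t → F (θ t) ≤ 0 := by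
          intro t ht
          rcases lt_or_eq_of_le (htrap t ht) with h | h
          · exact hFneg _ h (hmem t ht).2
          · rw [← h, hFc]
        obtain ⟨L, hLmem, h0L, hge', htend, hFL⟩ := sis_anti_limit hFcont hode' hmem hsign
        have hcL : c ≤ L := ge_of_tendsto htend ((eventually_ge_atTop (0:ℝ)).mono htrap)
        have : L = c := by
          rcases lt_or_eq_of_le hcL with h | h
          · exfalso
            have hLpos : 0 < L := lt_of_le_of_lt hcmem.1 h
            have := hgneg L h hLmem.2
            rcases mul_eq_zero.1 hFL with h' | h'
            · exact absurd h' (ne_of_gt hLpos)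
            · exact absurd h' (ne_of_lt this)
          · exact h.symm
        exact this ▸ htend
    refine ⟨c, hcIco, ?_, ?_, htend⟩
    · have : g c = 0 := hgc
      simp only [hg] at this
      linarith
    · intro θd' hθd' heq
      apply hsa.injOn hθd' hcIco
      have : g θd' = 0 := by simp only [hg]; linarith
      rw [this, hgc]
end

section
/- Let K ≥ 1, weights w_k > 0 with Σ_k w_k = 1, and participation levels a_k > 0. If τ Σ_k w_k a_k > 1 where τ > 0, then the equation Σ_{k=1}^K (τ w_k a_k)/(τ θ a_k + 1) = 1 has a unique solution θ ∈ (0,1). -/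
/-- if `τ Σ w_k a_k > 1`, the steady-state equation
`Σ_k (τ w_k a_k)/(τ θ a_k + 1) = 1` has a unique solution `θ ∈ (0,1)`. -/
theorem nonzero_steady_state_unique
    (K : ℕ) (hK : 1 ≤ K) (w a : Fin K → ℝ) (τ : ℝ)
    (hw : ∀ k, 0 < w k) (hws : ∑ k, w k = 1) (ha : ∀ k, 0 < a k) (hτ : 0 < τ)
    (hbig : τ * ∑ k, w k * a k > 1) :
    ∃! θ : ℝ, θ ∈ Set.Ioo (0:ℝ) 1 ∧ ∑ k, (τ * w k * a k) / (τ * θ * a k + 1) = 1 := by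
  have hKne : Nonempty (Fin K) := Fin.pos_iff_nonempty.mp hK
  set g : ℝ → ℝ := fun θ => ∑ k, (τ * w k * a k) / (τ * θ * a k + 1) with hg
  have hden : ∀ θ : ℝ, 0 ≤ θ → ∀ k : Fin K, 0 < τ * θ * a k + 1 := by
    intro θ hθ k
    have : 0 ≤ τ * θ * a k := mul_nonneg (mul_nonneg hτ.le hθ) (ha k).le
    linarith
  -- strict anti on [0,∞)
  have hanti : ∀ x y : ℝ, 0 ≤ x → x < y → g y < g x := by
    intro x y hx hxy
    apply Finset.sum_lt_sum_of_nonempty (Finset.univ_nonempty)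
    intro k _
    have hnum : 0 < τ * w k * a k := mul_pos (mul_pos hτ (hw k)) (ha k)
    apply div_lt_div_of_pos_left hnum (hden x hx k)
    have h2 : τ * x * a k < τ * y * a k := by nlinarith [mul_pos hτ (ha k)]
    linarith
  -- continuity on [0,1]
  have hcont : ContinuousOn g (Set.Icc (0:ℝ) 1) := by
    apply continuousOn_finset_sum
    intro k _
    apply ContinuousOn.div continuousOn_const
    · exact ((continuous_const.mul continuous_id).mul continuous_const |>.add
        continuous_const).continuousOn
    · intro θ hθ
      exact ne_of_gt (hden θ hθ.1 k)
  have hg0 : g 0 = τ * ∑ k, w k * a k := by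
    simp [hg, Finset.mul_sum, mul_assoc]
  have hg1 : g 1 < 1 := by
    have : g 1 < ∑ k, w k := by
      apply Finset.sum_lt_sum_of_nonempty (Finset.univ_nonempty)
      intro k _
      rw [div_lt_iff₀ (hden 1 zero_le_one k)]
      have hwk := hw k; have hak := ha k
      nlinarith
    linarith [hws ▸ this]
  have hg0' : 1 < g 0 := by rw [hg0]; exact hbig
  -- existence by IVT
  have hsub : Set.Ioo (g 1) (g 0) ⊆ g '' Set.Ioo 0 1 :=
    intermediate_value_Ioo' zero_le_one hcont
  obtain ⟨θ, hθmem, hθeq⟩ := hsub ⟨hg1, hg0'⟩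
  refine ⟨θ, ⟨hθmem, hθeq⟩, ?_⟩
  rintro θ' ⟨hθ'mem, hθ'eq⟩
  by_contra hne
  rcases lt_or_gt_of_ne hne with h | h
  · have := hanti θ' θ (le_of_lt hθ'mem.1) h
    rw [hθeq] at this; exact absurd hθ'eq (ne_of_gt this)
  · have := hanti θ θ' (le_of_lt hθmem.1) h
    rw [hθeq] at this; exact absurd hθ'eq (ne_of_lt this)
end

section
/- Let K ≥ 1, w_k > 0 with Σ_k w_k = 1, a_k > 0, τ > 0. If τ ≤ 1/(Σ_k w_k a_k), then the only solution (θ, θ₁, ..., θ_K) ∈ [0,1]^{K+1} of the steady-state system θ_k = τθa_k/(τθa_k + 1) for all k and θ = Σ_k w_k θ_k is θ = θ₁ = ... = θ_K = 0. -/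
/-- if `τ ≤ 1/(Σ w_k a_k)`, the only steady state of the multi-type SIS
system is the zero state. -/
theorem subcritical_steady_state_zero
    (K : ℕ) (hK : 1 ≤ K) (w a : Fin K → ℝ) (τ : ℝ)
    (hw : ∀ k, 0 < w k) (hws : ∑ k, w k = 1) (ha : ∀ k, 0 < a k) (hτ : 0 < τ)
    (hsmall : τ ≤ 1 / ∑ k, w k * a k)
    (θ : ℝ) (θk : Fin K → ℝ)
    (hθ : θ ∈ Set.Icc (0:ℝ) 1) (hθk : ∀ k, θk k ∈ Set.Icc (0:ℝ) 1)
    (heq : ∀ k, θk k = τ * θ * a k / (τ * θ * a k + 1))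
    (hsum : θ = ∑ k, w k * θk k) :
    θ = 0 ∧ ∀ k, θk k = 0 := by
  have hS : 0 < ∑ k, w k * a k := by
    apply Finset.sum_pos
    · intro k _; exact mul_pos (hw k) (ha k)
    · exact Finset.univ_nonempty_iff.mpr (Fin.pos_iff_nonempty.mp hK)
  have hθ0 : θ = 0 := by
    by_contra h
    have hθpos : 0 < θ := lt_of_le_of_ne hθ.1 (Ne.symm h)
    have hlt : ∀ k, θk k < τ * θ * a k := by
      intro k
      rw [heq k]
      have hx : 0 < τ * θ * a k := mul_pos (mul_pos hτ hθpos) (ha k)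
      rw [div_lt_iff₀ (by linarith)]
      nlinarith
    have hlt2 : ∑ k, w k * θk k < ∑ k, w k * (τ * θ * a k) := by
      apply Finset.sum_lt_sum_of_nonempty (Finset.univ_nonempty_iff.mpr (Fin.pos_iff_nonempty.mp hK))
      intro k _
      exact mul_lt_mul_of_pos_left (hlt k) (hw k)
    have h2 : ∑ k, w k * (τ * θ * a k) = τ * θ * ∑ k, w k * a k := by
      rw [Finset.mul_sum]; congr 1; ext k; ring
    have h3 : τ * (∑ k, w k * a k) ≤ 1 := by
      rw [le_div_iff₀ hS] at hsmall; linarith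
    nlinarith [hlt2, hsum]
  refine ⟨hθ0, fun k => ?_⟩
  rw [heq k, hθ0]; simp
end

section
/- Let K ≥ 1 and for each k let a_k: [0,1] → (0, M] be continuous and nonincreasing with a_k(0) = a_k^AF > 0, and let w_k > 0, Σ_k w_k = 1, τ > 0. Define F(θ) = Σ_k (τ w_k a_k(θ))/(τ θ a_k(θ) + 1). If τ > 1/(Σ_k w_k a_k^AF), then F(0) > 1, F(1) < 1, F is strictly decreasing, and hence there exists a unique θ^∞ ∈ (0,1) with F(θ^∞) = 1. -/
/-- supercritical equilibrium fixed point for the heterogeneous participation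
game: `F(0) > 1`, `F(1) < 1`, `F` strictly decreasing, hence a unique `θ^∞ ∈ (0,1)` with
`F(θ^∞) = 1`. -/
theorem supercritical_equilibrium_fixed_point
    (K : ℕ) (hK : 1 ≤ K) (M τ : ℝ) (hM : 0 < M) (hτ : 0 < τ)
    (w aAF : Fin K → ℝ) (a : Fin K → ℝ → ℝ)
    (hw : ∀ k, 0 < w k) (hws : ∑ k, w k = 1)
    (hcont : ∀ k, ContinuousOn (a k) (Set.Icc 0 1))
    (hanti : ∀ k, AntitoneOn (a k) (Set.Icc 0 1))
    (hrange : ∀ k, ∀ s ∈ Set.Icc (0:ℝ) 1, a k s ∈ Set.Ioc (0:ℝ) M)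
    (h0 : ∀ k, a k 0 = aAF k) (hAFpos : ∀ k, 0 < aAF k)
    (F : ℝ → ℝ)
    (hF : ∀ s, F s = ∑ k, (τ * w k * a k s) / (τ * s * a k s + 1))
    (hbig : τ > 1 / ∑ k, w k * aAF k) :
    F 0 > 1 ∧ F 1 < 1 ∧ StrictAntiOn F (Set.Icc 0 1) ∧
      ∃! s : ℝ, s ∈ Set.Ioo (0:ℝ) 1 ∧ F s = 1 := by
  haveI : Nonempty (Fin K) := ⟨⟨0, hK⟩⟩
  have hapos : ∀ k, ∀ s ∈ Set.Icc (0:ℝ) 1, 0 < a k s := fun k s hs => (hrange k s hs).1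
  have hden : ∀ k, ∀ s ∈ Set.Icc (0:ℝ) 1, 0 < τ * s * a k s + 1 := by
    intro k s hs
    have : 0 ≤ τ * s * a k s :=
      mul_nonneg (mul_nonneg hτ.le hs.1) (hapos k s hs).le
    linarith
  -- F 0 > 1
  have hS : 0 < ∑ k, w k * aAF k :=
    Finset.sum_pos (fun k _ => mul_pos (hw k) (hAFpos k)) Finset.univ_nonempty
  have hF0 : F 0 > 1 := by
    have : F 0 = τ * ∑ k, w k * aAF k := by
      rw [hF]
      rw [Finset.mul_sum]
      refine Finset.sum_congr rfl fun k _ => ?_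
      rw [h0]
      ring
    rw [this]
    have := (div_lt_iff₀ hS).mp hbig
    linarith
  -- F 1 < 1
  have hF1 : F 1 < 1 := by
    rw [hF]
    have h1 : (1:ℝ) ∈ Set.Icc (0:ℝ) 1 := by norm_num
    calc ∑ k, (τ * w k * a k 1) / (τ * 1 * a k 1 + 1) < ∑ k, w k := by
          refine Finset.sum_lt_sum_of_nonempty Finset.univ_nonempty fun k _ => ?_
          rw [div_lt_iff₀ (hden k 1 h1)]
          have hak := hapos k 1 h1
          have := hw k
          nlinarith
      _ = 1 := hws
  -- strict antitone
  have hanti' : StrictAntiOn F (Set.Icc 0 1) := by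
    intro s hs t ht hst
    rw [hF, hF]
    refine Finset.sum_lt_sum_of_nonempty Finset.univ_nonempty fun k _ => ?_
    have hx := hapos k s hs
    have hy := hapos k t ht
    have hyx : a k t ≤ a k s := hanti k hs ht hst.le
    have hds := hden k s hs
    have hdt := hden k t ht
    have ht0 : (0:ℝ) ≤ t := ht.1
    have hs0 : (0:ℝ) ≤ s := hs.1
    have hdts : (0:ℝ) < τ * t * a k s + 1 := by
      nlinarith [mul_nonneg (mul_nonneg hτ.le ht0) hx.le]
    have h1 : (τ * w k * a k t) / (τ * t * a k t + 1)
        ≤ (τ * w k * a k s) / (τ * t * a k s + 1) := by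
      rw [div_le_div_iff₀ hdt hdts]
      have hwk := (hw k).le
      nlinarith [mul_le_mul_of_nonneg_left hyx (mul_nonneg hτ.le hwk)]
    have h2 : (τ * w k * a k s) / (τ * t * a k s + 1)
        < (τ * w k * a k s) / (τ * s * a k s + 1) := by
      apply div_lt_div_of_pos_left (mul_pos (mul_pos hτ (hw k)) hx) hds
      nlinarith [mul_lt_mul_of_pos_right (mul_lt_mul_of_pos_left hst hτ) hx]
    linarith
  refine ⟨hF0, hF1, hanti', ?_⟩
  -- continuity of F on Icc 0 1
  have hFc : ContinuousOn F (Set.Icc 0 1) := by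
    have : ContinuousOn (fun s => ∑ k, (τ * w k * a k s) / (τ * s * a k s + 1))
        (Set.Icc 0 1) := by
      refine continuousOn_finset_sum _ fun k _ => ContinuousOn.div ?_ ?_ ?_
      · exact (continuousOn_const.mul (hcont k))
      · exact ((continuousOn_const.mul continuousOn_id).mul (hcont k)).add continuousOn_const
      · intro s hs; exact (hden k s hs).ne'
    exact this.congr fun s _ => hF s
  have hsub : Set.Ioo (F 1) (F 0) ⊆ F '' Set.Ioo 0 1 :=
    intermediate_value_Ioo' (by norm_num) hFc
  obtain ⟨s, hsmem, hsval⟩ := hsub ⟨hF1, hF0⟩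
  refine ⟨s, ⟨hsmem, hsval⟩, ?_⟩
  rintro t ⟨htmem, htval⟩
  have hsI : s ∈ Set.Icc (0:ℝ) 1 := Set.Ioo_subset_Icc_self hsmem
  have htI : t ∈ Set.Icc (0:ℝ) 1 := Set.Ioo_subset_Icc_self htmem
  exact hanti'.injOn htI hsI (by rw [htval, hsval])
end

section
/- Under the hypotheses of the previous statement, if instead τ ≤ 1/(Σ_k w_k a_k^AF), then θ = 0 is the unique fixed point in [0,1) of the equilibrium condition: θ = 0 or F(θ) = 1, i.e., there is no θ ∈ (0,1) with F(θ) = 1. -/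
/-- in the subcritical case `τ ≤ 1/(Σ w_k a_k^AF)`, `θ = 0` is the unique
equilibrium fixed point in `[0,1)`: no `θ ∈ (0,1)` satisfies `F(θ) = 1`. -/
theorem subcritical_equilibrium_unique_zero
    (K : ℕ) (hK : 1 ≤ K) (M τ : ℝ) (hM : 0 < M) (hτ : 0 < τ)
    (w aAF : Fin K → ℝ) (a : Fin K → ℝ → ℝ)
    (hw : ∀ k, 0 < w k) (hws : ∑ k, w k = 1)
    (hcont : ∀ k, ContinuousOn (a k) (Set.Icc 0 1))
    (hanti : ∀ k, AntitoneOn (a k) (Set.Icc 0 1))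
    (hrange : ∀ k, ∀ s ∈ Set.Icc (0:ℝ) 1, a k s ∈ Set.Ioc (0:ℝ) M)
    (h0 : ∀ k, a k 0 = aAF k) (hAFpos : ∀ k, 0 < aAF k)
    (F : ℝ → ℝ)
    (hF : ∀ s, F s = ∑ k, (τ * w k * a k s) / (τ * s * a k s + 1))
    (hsmall : τ ≤ 1 / ∑ k, w k * aAF k) :
    ∀ s ∈ Set.Ico (0:ℝ) 1, (s = 0 ∨ F s = 1) → s = 0 := by
  intro s hs hcase
  rcases hcase with h | h
  · exact h
  by_contra hne
  have hspos : 0 < s := lt_of_le_of_ne hs.1 (Ne.symm hne)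
  have hsmem : s ∈ Set.Icc (0:ℝ) 1 := ⟨hs.1, hs.2.le⟩
  have h0mem : (0:ℝ) ∈ Set.Icc (0:ℝ) 1 := by norm_num
  haveI : Nonempty (Fin K) := ⟨⟨0, hK⟩⟩
  have hSpos : 0 < ∑ k, w k * aAF k :=
    Finset.sum_pos (fun k _ => mul_pos (hw k) (hAFpos k)) Finset.univ_nonempty
  have hτS : τ * ∑ k, w k * aAF k ≤ 1 := by
    rw [le_div_iff₀ hSpos] at hsmall; linarith
  have hlt : F s < 1 := by
    rw [hF]
    have hterm : ∀ k ∈ (Finset.univ : Finset (Fin K)),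
        (τ * w k * a k s) / (τ * s * a k s + 1) < τ * (w k * aAF k) := by
      intro k _
      have haks : 0 < a k s := (hrange k s hsmem).1
      have hnum : 0 < τ * w k * a k s := mul_pos (mul_pos hτ (hw k)) haks
      have hden : 1 < τ * s * a k s + 1 := by
        nlinarith [mul_pos (mul_pos hτ hspos) haks]
      have h1 : (τ * w k * a k s) / (τ * s * a k s + 1) < τ * w k * a k s :=
        div_lt_self hnum hden
      have h2 : a k s ≤ aAF k := by
        have := hanti k h0mem hsmem hspos.le
        rwa [h0 k] at this
      nlinarith [mul_pos hτ (hw k)]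
    calc ∑ k, (τ * w k * a k s) / (τ * s * a k s + 1)
        < ∑ k, τ * (w k * aAF k) :=
          Finset.sum_lt_sum_of_nonempty Finset.univ_nonempty hterm
      _ = τ * ∑ k, w k * aAF k := by rw [Finset.mul_sum]
      _ ≤ 1 := hτS
  exact absurd h (ne_of_lt hlt)
end

section
/- Let A: [0, ∞) → [0, ∞) be continuous and strictly increasing with A(0) = 0 (the aggregate attack-free participation level as a function of the reward r₀), let b₀ > 0 and τ > 0, and define the effective participation G(r₀) for the equilibrium as: G(r₀) = A(r₀) if A(r₀) ≤ 1/τ, and G(r₀) = 1/τ if A(r₀) > 1/τ. Then max over r₀ ∈ [0, b₀] of (b₀ - r₀)G(r₀) equals max over {r₀ ∈ [0, b₀] : A(r₀) ≤ 1/τ} of (b₀ - r₀)A(r₀). -/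
/-- "less is more", Theorem 2: the operator's problem with the capped
effective participation `G = min(A, 1/τ)` is equivalent to the attack-free problem with
the added constraint `A(r₀) ≤ 1/τ`. -/
theorem less_is_more_equivalence
    (b₀ τ : ℝ) (hb : 0 < b₀) (hτ : 0 < τ)
    (A G : ℝ → ℝ)
    (hAc : ContinuousOn A (Set.Ici 0))
    (hAm : StrictMonoOn A (Set.Ici 0))
    (hA0 : A 0 = 0)
    (hAnn : ∀ r, 0 ≤ r → 0 ≤ A r)
    (hG : ∀ r, G r = if A r ≤ 1 / τ then A r else 1 / τ) :
    sSup ((fun r => (b₀ - r) * G r) '' Set.Icc 0 b₀) =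
      sSup ((fun r => (b₀ - r) * A r) '' {r | r ∈ Set.Icc (0:ℝ) b₀ ∧ A r ≤ 1 / τ}) := by
  have hτ' : (0:ℝ) < 1 / τ := by positivity
  set S1 := ((fun r => (b₀ - r) * G r) '' Set.Icc 0 b₀) with hS1
  set S2 := ((fun r => (b₀ - r) * A r) '' {r | r ∈ Set.Icc (0:ℝ) b₀ ∧ A r ≤ 1 / τ}) with hS2
  have h0mem : (0:ℝ) ∈ {r | r ∈ Set.Icc (0:ℝ) b₀ ∧ A r ≤ 1 / τ} :=
    ⟨⟨le_refl 0, hb.le⟩, by rw [hA0]; exact hτ'.le⟩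
  have hS2ne : S2.Nonempty := ⟨_, 0, h0mem, rfl⟩
  have hS1ne : S1.Nonempty := ⟨_, 0, ⟨le_refl 0, hb.le⟩, rfl⟩
  have hGle : ∀ r, G r ≤ 1 / τ := by
    intro r; rw [hG]
    split
    · assumption
    · exact le_refl _
  have hGnn : ∀ r, 0 ≤ r → 0 ≤ G r := by
    intro r hr; rw [hG]
    split
    · exact hAnn r hr
    · exact hτ'.le
  have hS1bdd : BddAbove S1 := by
    refine ⟨b₀ * (1 / τ), ?_⟩
    rintro x ⟨r, ⟨hr0, hrb⟩, rfl⟩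
    exact mul_le_mul (by linarith) (hGle r) (hGnn r hr0) hb.le
  have hS2bdd : BddAbove S2 := by
    refine ⟨b₀ * (1 / τ), ?_⟩
    rintro x ⟨r, ⟨⟨hr0, hrb⟩, hAr⟩, rfl⟩
    exact mul_le_mul (by linarith) hAr (hAnn r hr0) hb.le
  apply le_antisymm
  · apply csSup_le hS1ne
    rintro x ⟨r, ⟨hr0, hrb⟩, rfl⟩
    show (b₀ - r) * G r ≤ sSup S2
    by_cases hcap : A r ≤ 1 / τ
    · have : (b₀ - r) * G r = (b₀ - r) * A r := by rw [hG, if_pos hcap]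
      rw [this]
      exact le_csSup hS2bdd ⟨r, ⟨⟨hr0, hrb⟩, hcap⟩, rfl⟩
    · push_neg at hcap
      -- IVT: find r' ∈ [0, r] with A r' = 1/τ
      have hcont : ContinuousOn A (Set.Icc 0 r) :=
        hAc.mono (fun x hx => hx.1)
      have hIVT := intermediate_value_Icc hr0 hcont
      have hmem : (1 / τ) ∈ Set.Icc (A 0) (A r) := ⟨by rw [hA0]; exact hτ'.le, hcap.le⟩
      obtain ⟨r', ⟨hr'0, hr'r⟩, hAr'⟩ := hIVT hmem
      have hval : (b₀ - r) * G r = (b₀ - r) * (1 / τ) := by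
        rw [hG, if_neg (not_le.mpr hcap)]
      rw [hval]
      have hle : (b₀ - r) * (1 / τ) ≤ (b₀ - r') * A r' := by
        rw [hAr']
        exact mul_le_mul_of_nonneg_right (by linarith) hτ'.le
      exact hle.trans (le_csSup hS2bdd ⟨r', ⟨⟨hr'0, hr'r.trans hrb⟩, hAr'.le⟩, rfl⟩)
  · apply csSup_le hS2ne
    rintro x ⟨r, ⟨⟨hr0, hrb⟩, hAr⟩, rfl⟩
    show (b₀ - r) * A r ≤ sSup S1
    have : (b₀ - r) * A r = (b₀ - r) * G r := by rw [hG, if_pos hAr]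
    rw [this]
    exact le_csSup hS1bdd ⟨r, ⟨hr0, hrb⟩, rfl⟩
end

section
/- In the setting of the previous statement, any maximizer r* of (b₀ - r₀)G(r₀) over [0, b₀] satisfies r* ≤ r^AF*, where r^AF* is the largest maximizer of (b₀ - r₀)A(r₀) over [0, b₀] (the attack-free optimal reward). -/
/-- Corollary 2: any maximizer of the security-aware objective is no larger
than the (largest) attack-free optimal reward. -/
theorem security_aware_reward_le_attack_free
    (b₀ τ : ℝ) (hb : 0 < b₀) (hτ : 0 < τ)
    (A G : ℝ → ℝ)
    (hAc : ContinuousOn A (Set.Ici 0))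
    (hAm : StrictMonoOn A (Set.Ici 0))
    (hA0 : A 0 = 0)
    (hAnn : ∀ r, 0 ≤ r → 0 ≤ A r)
    (hG : ∀ r, G r = if A r ≤ 1 / τ then A r else 1 / τ)
    (rstar rAF : ℝ)
    (hstar_mem : rstar ∈ Set.Icc (0:ℝ) b₀)
    (hstar_max : ∀ r ∈ Set.Icc (0:ℝ) b₀, (b₀ - r) * G r ≤ (b₀ - rstar) * G rstar)
    (hAF_mem : rAF ∈ Set.Icc (0:ℝ) b₀)
    (hAF_max : ∀ r ∈ Set.Icc (0:ℝ) b₀, (b₀ - r) * A r ≤ (b₀ - rAF) * A rAF)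
    (hAF_largest : ∀ r ∈ Set.Icc (0:ℝ) b₀,
      (∀ r' ∈ Set.Icc (0:ℝ) b₀, (b₀ - r') * A r' ≤ (b₀ - r) * A r) → r ≤ rAF) :
    rstar ≤ rAF := by
  by_contra hlt
  push_neg at hlt  -- rAF < rstar
  obtain ⟨hs0, hsb⟩ := hstar_mem
  obtain ⟨hA0', hAb⟩ := hAF_mem
  have hτ' : 0 < 1 / τ := by positivity
  by_cases hcase : A rstar ≤ 1 / τ
  · -- G rstar = A rstar, and A rAF ≤ 1/τ too
    have hGs : G rstar = A rstar := by rw [hG, if_pos hcase]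
    have hAAF_lt : A rAF < A rstar := hAm hA0' hs0 hlt
    have hGAF : G rAF = A rAF := by
      rw [hG, if_pos (le_of_lt (lt_of_lt_of_le hAAF_lt hcase))]
    -- F_A rAF = F_G rAF ≤ F_G rstar = F_A rstar ≤ F_A rAF
    have h1 : (b₀ - rAF) * A rAF ≤ (b₀ - rstar) * A rstar := by
      have := hstar_max rAF ⟨hA0', hAb⟩
      rwa [hGAF, hGs] at this
    have h2 : (b₀ - rstar) * A rstar ≤ (b₀ - rAF) * A rAF :=
      hAF_max rstar ⟨hs0, hsb⟩
    have heq : (b₀ - rstar) * A rstar = (b₀ - rAF) * A rAF := le_antisymm h2 h1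
    have hmax : ∀ r' ∈ Set.Icc (0:ℝ) b₀, (b₀ - r') * A r' ≤ (b₀ - rstar) * A rstar := by
      intro r' hr'
      rw [heq]; exact hAF_max r' hr'
    exact absurd (hAF_largest rstar ⟨hs0, hsb⟩ hmax) (not_le.mpr hlt)
  · push_neg at hcase  -- 1/τ < A rstar
    have hGs : G rstar = 1 / τ := by rw [hG, if_neg (not_le.mpr hcase)]
    -- find r' ∈ [rAF, rstar), with G r' = 1/τ
    obtain ⟨r', hmem, hr'lt, hGr'⟩ :
        ∃ r', r' ∈ Set.Icc rAF rstar ∧ r' < rstar ∧ G r' = 1 / τ := by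
      by_cases hAAF : A rAF ≤ 1 / τ
      · -- IVT
        have hsub : Set.Icc rAF rstar ⊆ Set.Ici 0 := fun x hx => le_trans hA0' hx.1
        have hivt := intermediate_value_Icc (le_of_lt hlt) (hAc.mono hsub)
        obtain ⟨r', hr'mem, hAr'⟩ := hivt ⟨hAAF, le_of_lt hcase⟩
        have hne : r' ≠ rstar := by
          intro h; rw [h] at hAr'; exact absurd hAr' (ne_of_lt hcase).symm
        refine ⟨r', hr'mem, lt_of_le_of_ne hr'mem.2 hne, ?_⟩
        rw [hG, hAr', if_pos le_rfl]
      · push_neg at hAAF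
        refine ⟨rAF, ⟨le_refl _, le_of_lt hlt⟩, hlt, ?_⟩
        rw [hG, if_neg (not_le.mpr hAAF)]
    have hr'0 : 0 ≤ r' := le_trans hA0' hmem.1
    have hr'b : r' ≤ b₀ := le_trans hmem.2 hsb
    have := hstar_max r' ⟨hr'0, hr'b⟩
    rw [hGr', hGs] at this
    have hgt : (b₀ - rstar) * (1 / τ) < (b₀ - r') * (1 / τ) := by
      apply mul_lt_mul_of_pos_right _ hτ'
      linarith
    linarith
end

section
/- Fix τ > 0, K ≥ 1, weights w_k > 0 summing to 1, and θ ∈ (0,1). For each k suppose a_k ∈ (0,M] satisfies θ_k = τθa_k/(τθa_k+1) and θ = Σ_k w_k θ_k. Then the effective participation level satisfies Σ_{k=1}^K w_k (1 - θ_k) a_k = 1/τ. -/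
/-- steady-state identity — when the infection persists, the effective
participation level `Σ w_k (1-θ_k) a_k` is pinned at exactly `1/τ`. -/
theorem effective_participation_pinned
    (K : ℕ) (hK : 1 ≤ K) (τ M θ : ℝ) (hτ : 0 < τ) (hM : 0 < M)
    (hθ : θ ∈ Set.Ioo (0:ℝ) 1)
    (w a θk : Fin K → ℝ)
    (hw : ∀ k, 0 < w k) (hws : ∑ k, w k = 1)
    (ha : ∀ k, a k ∈ Set.Ioc (0:ℝ) M)
    (heq : ∀ k, θk k = τ * θ * a k / (τ * θ * a k + 1))
    (hsum : θ = ∑ k, w k * θk k) :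
    ∑ k, w k * (1 - θk k) * a k = 1 / τ := by
  obtain ⟨hθ0, hθ1⟩ := hθ
  have key : ∀ k, w k * θk k = τ * θ * (w k * (1 - θk k) * a k) := by
    intro k
    have h0 : 0 < a k := (ha k).1
    have hd : τ * θ * a k + 1 ≠ 0 := by positivity
    rw [heq k]
    field_simp
    ring
  have hS : θ = τ * θ * ∑ k, w k * (1 - θk k) * a k := by
    rw [Finset.mul_sum]
    rw [← Finset.sum_congr rfl fun k _ => key k]
    exact hsum
  have hτθ : τ * θ ≠ 0 := by positivity
  field_simp at hS ⊢
  nlinarith [hS]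
end
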